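/- arXiv:2107.12263 — 2 statements merged into one kernel-verified Lean document; each statement's English description precedes it below -/
import Mathlib

section
/- The cocycle κ classifying 𝒵_n as an extension of S_n by ℤ₂^(n choose 2) equals η ∘ φ, where φ is the cocycle classifying G_n as an extension of S_n by ℤ^(n choose 2) and η: ℤ^(n choose 2) → ℤ₂^(n choose 2) is the coordinatewise mod 2 reduction. Explicitly, κ(c̃_{i,j}) = ḡ_{i,j}; κ(d̃_{i,j,k,ℓ}) = ḡ_{i,k} + ḡ_{k,j} + ḡ_{i,ℓ} + ḡ_{ℓ,j} if i<k<j<ℓ or k<i<ℓ<j, else 0; κ(ẽ_{i,k,j}) = ḡ_{i,j} + ḡ_{j,k} if i<k<j, j<i<k, or k<j<i, else 0. Consequently the class [κ] ∈ H²(S_n; ℤ₂^(n choose 2)) is the mod 2 reduction of the class [φ] ∈ H²(S_n; ℤ^(n choose 2)). -/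
/-- Artin relations for the braid group on `n` strands (generators indexed by `Fin (n-1)`). -/
def braidRels (n : ℕ) : Set (FreeGroup (Fin (n - 1))) :=
  {r | ∃ i j : Fin (n - 1),
    ((i : ℕ) + 1 = (j : ℕ) ∧
      r = FreeGroup.of i * FreeGroup.of j * FreeGroup.of i *
        (FreeGroup.of j * FreeGroup.of i * FreeGroup.of j)⁻¹) ∨
    ((i : ℕ) + 1 < (j : ℕ) ∧
      r = FreeGroup.of i * FreeGroup.of j * (FreeGroup.of j * FreeGroup.of i)⁻¹)}

/-- The braid group `B_n`. -/
abbrev BraidGroup (n : ℕ) := PresentedGroup (braidRels n)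

/-- The Artin generator `b_t` (`0`-based; trivial outside range). -/
noncomputable def bgen (n t : ℕ) : BraidGroup n :=
  if h : t < n - 1 then PresentedGroup.of (⟨t, h⟩ : Fin (n - 1)) else 1

/-- The product `b_i ⋯ b_{j-1}`. -/
noncomputable def bpref (n i j : ℕ) : BraidGroup n :=
  ((List.range' i (j - i)).map (bgen n)).prod

/-- The half twist `b_{i,j}` (for strands `i < j`, `0`-based). -/
noncomputable def halfTwist (n i j : ℕ) : BraidGroup n :=
  bpref n i (j - 1) * bgen n (j - 1) * (bpref n i (j - 1))⁻¹

/-- The half twist for unordered indices. -/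
noncomputable def bb (n i j : ℕ) : BraidGroup n := halfTwist n (min i j) (max i j)

/-- The standard generator condition for the projection `B_n → S_n`. -/
def IsBraidProj (n : ℕ) (π : BraidGroup n →* Equiv.Perm (Fin n)) : Prop :=
  ∀ i : Fin (n - 1), π (PresentedGroup.of i) =
    Equiv.swap ⟨(i : ℕ), by have := i.2; omega⟩ ⟨(i : ℕ) + 1, by have := i.2; omega⟩

/-- `G_n = B_n/[PB_n, PB_n]`. -/
abbrev Gq (n : ℕ) (π : BraidGroup n →* Equiv.Perm (Fin n)) :=
  BraidGroup n ⧸ (⁅π.ker, π.ker⁆ : Subgroup (BraidGroup n))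

/-- Image of the half twist `b_{i,j}` in `G_n`. -/
noncomputable def ht (n : ℕ) (π : BraidGroup n →* Equiv.Perm (Fin n)) (i j : ℕ) : Gq n π :=
  QuotientGroup.mk (bb n i j)

/-- Image of the full twist `b_{i,j}²` in `G_n`. -/
noncomputable def ft (n : ℕ) (π : BraidGroup n →* Equiv.Perm (Fin n)) (i j : ℕ) : Gq n π :=
  QuotientGroup.mk ((bb n i j) ^ 2)

/-- The subgroup `A_n ≤ G_n` normally generated by the squares of the full twists. -/
abbrev An (n : ℕ) (π : BraidGroup n →* Equiv.Perm (Fin n)) : Subgroup (Gq n π) :=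
  Subgroup.normalClosure {x : Gq n π | ∃ i j : ℕ, i < j ∧ j < n ∧ x = (ft n π i j) ^ 2}

/-- The mod 4 braid group `𝒵_n`, realized as `G_n/A_n`. -/
abbrev Zq (n : ℕ) (π : BraidGroup n →* Equiv.Perm (Fin n)) := Gq n π ⧸ An n π

/-- The generator `ḡ_{i,j}` of the kernel `ℤ₂^(n choose 2)` of `𝒵_n → S_n`. -/
noncomputable def fgZ (n : ℕ) (π : BraidGroup n →* Equiv.Perm (Fin n)) (i j : ℕ) : Zq n π :=
  QuotientGroup.mk (ft n π i j)

lemma rel_eq_one {n : ℕ} {r : FreeGroup (Fin (n-1))} (h : r ∈ braidRels n) :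
    PresentedGroup.mk (braidRels n) r = 1 := by
  have : r ∈ Subgroup.normalClosure (braidRels n) := Subgroup.subset_normalClosure h
  exact (QuotientGroup.eq_one_iff r).mpr this

lemma bgen_braid {n t : ℕ} (h : t + 1 < n - 1) :
    bgen n t * bgen n (t+1) * bgen n t = bgen n (t+1) * bgen n t * bgen n (t+1) := by
  have ht : t < n - 1 := by omega
  have hr : (FreeGroup.of (⟨t, ht⟩ : Fin (n-1)) * FreeGroup.of (⟨t+1, h⟩ : Fin (n-1)) *
      FreeGroup.of ⟨t, ht⟩ * (FreeGroup.of (⟨t+1, h⟩ : Fin (n-1)) * FreeGroup.of ⟨t, ht⟩ *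
      FreeGroup.of (⟨t+1, h⟩ : Fin (n-1)))⁻¹) ∈ braidRels n := by
    exact ⟨⟨t, ht⟩, ⟨t+1, h⟩, Or.inl ⟨rfl, rfl⟩⟩
  have := rel_eq_one hr
  simp only [map_mul, map_inv] at this
  rw [bgen, bgen, dif_pos ht, dif_pos h]
  have h2 := mul_inv_eq_one.mp this
  exact h2

lemma bgen_comm {n t u : ℕ} (h : t + 1 < u) :
    bgen n t * bgen n u = bgen n u * bgen n t := by
  by_cases hu : u < n - 1
  · have ht : t < n - 1 := by omega
    have hr : (FreeGroup.of (⟨t, ht⟩ : Fin (n-1)) * FreeGroup.of (⟨u, hu⟩ : Fin (n-1)) *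
        (FreeGroup.of (⟨u, hu⟩ : Fin (n-1)) * FreeGroup.of (⟨t, ht⟩ : Fin (n-1)))⁻¹) ∈
        braidRels n := ⟨⟨t, ht⟩, ⟨u, hu⟩, Or.inr ⟨h, rfl⟩⟩
    have := rel_eq_one hr
    simp only [map_mul, map_inv] at this
    rw [bgen, bgen, dif_pos ht, dif_pos hu]
    exact mul_inv_eq_one.mp this
  · simp only [bgen]
    rw [dif_neg hu]
    simp

lemma bpref_of_le {n i j : ℕ} (h : j ≤ i) : bpref n i j = 1 := by
  have : j - i = 0 := by omega
  simp [bpref, this]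

lemma bpref_succ {n i j : ℕ} (h : i ≤ j) : bpref n i (j+1) = bpref n i j * bgen n j := by
  have h1 : j + 1 - i = (j - i) + 1 := by omega
  have h2 : i + (j - i) = j := by omega
  rw [bpref, bpref, h1, List.range'_1_concat, List.map_append, List.prod_append, h2]
  simp

lemma bpref_split {n : ℕ} (i k j : ℕ) (h1 : i ≤ k) (h2 : k ≤ j) :
    bpref n i j = bpref n i k * bpref n k j := by
  have h3 : j - i = (j - k) + (k - i) := by omega
  have h4 : i + (k - i) = k := by omega
  rw [bpref, bpref, bpref, h3, Nat.add_comm (j-k) (k-i), ← List.range'_append_1 (s := i) (m := k-i) (n := j-k), List.map_append,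
    List.prod_append, h4]

lemma bpref_self {n i : ℕ} : bpref n i i = 1 := bpref_of_le le_rfl

-- σ_t commutes with P(i,j) when t+1 < i or j < t
lemma bgen_bpref_comm {n : ℕ} {t i j : ℕ} (h : t + 1 < i ∨ j < t) :
    bgen n t * bpref n i j = bpref n i j * bgen n t := by
  induction j with
  | zero => rw [bpref_of_le (Nat.zero_le i)]; group
  | succ j ih =>
    by_cases hij : i ≤ j
    · rcases h with h | h
      · rw [bpref_succ hij, ← mul_assoc, ih (Or.inl h), mul_assoc, mul_assoc]
        congr 1; exact bgen_comm (show t+1<j by omega)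
      · rw [bpref_succ hij, ← mul_assoc, ih (Or.inr (by omega)), mul_assoc, mul_assoc]
        congr 1; exact (bgen_comm (show j+1<t by omega)).symm
    · rw [bpref_of_le (by omega)]; group

-- K: σ_{t+1} P(i,j) = P(i,j) σ_t  for i ≤ t, t+2 ≤ j ≤ n-1
lemma bgen_bpref_slide {n i j t : ℕ} (hi : i ≤ t) (hj : t + 2 ≤ j) (hn : j < n) :
    bgen n (t+1) * bpref n i j = bpref n i j * bgen n t := by
  induction j with
  | zero => omega
  | succ j ih =>
    by_cases hc : t + 2 ≤ j
    · rw [bpref_succ (show i ≤ j by omega), ← mul_assoc, ih hc (by omega), mul_assoc,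
        bgen_comm (show t + 1 < j by omega), ← mul_assoc, ← bpref_succ (show i ≤ j by omega)]
    · have hj1 : j = t + 1 := by omega
      subst hj1
      rw [bpref_succ (show i ≤ t + 1 by omega), bpref_succ (show i ≤ t by omega)]
      rw [← mul_assoc, ← mul_assoc, bgen_bpref_comm (Or.inr (show t < t + 1 by omega))]
      rw [mul_assoc, mul_assoc, mul_assoc, mul_assoc]
      congr 1
      rw [← mul_assoc, ← mul_assoc]
      exact (bgen_braid (show t + 1 < n - 1 by omega)).symm

-- move a prefix across a longer prefix, shifting down
lemma bpref_slide {n i j k l : ℕ} (hik : i ≤ k) (hlj : l + 1 ≤ j) (hn : j < n) :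
    bpref n (k+1) (l+1) * bpref n i j = bpref n i j * bpref n k l := by
  induction l with
  | zero => rw [bpref_of_le (show 1 ≤ k + 1 by omega), bpref_of_le (Nat.zero_le k)]; group
  | succ l ih =>
    by_cases hkl : k ≤ l
    · rw [bpref_succ (show k + 1 ≤ l + 1 by omega), mul_assoc,
        bgen_bpref_slide (show i ≤ l by omega) (show l + 2 ≤ j by omega) hn,
        ← mul_assoc, ih (by omega), mul_assoc, ← bpref_succ hkl]
    · rw [bpref_of_le (show l + 2 ≤ k + 1 by omega), bpref_of_le (show l + 1 ≤ k by omega)]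
      group

lemma bpref_bpref_comm {n i j k l : ℕ} (h : j < k) :
    bpref n i j * bpref n k l = bpref n k l * bpref n i j := by
  induction l with
  | zero => rw [bpref_of_le (Nat.zero_le k)]; group
  | succ l ih =>
    by_cases hkl : k ≤ l
    · rw [bpref_succ hkl, ← mul_assoc, ih, mul_assoc,
        ← bgen_bpref_comm (Or.inr (show j < l by omega)), ← mul_assoc]
    · rw [bpref_of_le (show l + 1 ≤ k by omega)]; group

lemma halfTwist_eq {n i j : ℕ} (h : i < j) :
    halfTwist n i j = bpref n i j * (bpref n i (j-1))⁻¹ := by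
  obtain ⟨m, rfl⟩ : ∃ m, j = m + 1 := ⟨j - 1, by omega⟩
  rw [halfTwist, Nat.add_sub_cancel, bpref_succ (show i ≤ m by omega)]

lemma slide_inv {G : Type*} [Group G] {a x b : G} (h : a * x = x * b) :
    a⁻¹ * x = x * b⁻¹ := by
  have h2 : a * (x * b⁻¹) = x := by rw [← mul_assoc, h]; group
  calc a⁻¹ * x = a⁻¹ * (a * (x * b⁻¹)) := by rw [h2]
    _ = x * b⁻¹ := by group

lemma comm_inv_inv {G : Type*} [Group G] {a b : G} (h : a * b = b * a) :
    a⁻¹ * b⁻¹ = b⁻¹ * a⁻¹ := by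
  rw [← mul_inv_rev, ← h, mul_inv_rev]

lemma bpref_conj_halfTwist {n i j k l : ℕ} (hik : i ≤ k) (hkl : k < l) (hlj : l < j)
    (hn : j < n) :
    bpref n i j * halfTwist n k l * (bpref n i j)⁻¹ = halfTwist n (k+1) (l+1) := by
  have e1 := bpref_slide (n := n) (i := i) (j := j) (k := k) (l := l) hik (by omega) hn
  have e2 := bpref_slide (n := n) (i := i) (j := j) (k := k) (l := l - 1) hik (by omega) hn
  rw [halfTwist_eq hkl, halfTwist_eq (show k + 1 < l + 1 by omega)]
  have h1 : (l - 1) + 1 = l := by omega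
  rw [h1] at e2
  have h2 : (l + 1) - 1 = l := by omega
  rw [h2]
  calc bpref n i j * (bpref n k l * (bpref n k (l-1))⁻¹) * (bpref n i j)⁻¹
      = (bpref n i j * bpref n k l) * (bpref n i j * bpref n k (l-1))⁻¹ := by group
    _ = (bpref n (k+1) (l+1) * bpref n i j) * (bpref n (k+1) l * bpref n i j)⁻¹ := by
        rw [← e1, ← e2]
    _ = bpref n (k+1) (l+1) * (bpref n (k+1) l)⁻¹ := by group

lemma braidT1 {n a b c : ℕ} (hab : a < b) (hbc : b < c) (hn : c < n) :
    halfTwist n a b * halfTwist n b c = halfTwist n a c * halfTwist n a b := by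
  rw [halfTwist_eq hab, halfTwist_eq hbc, halfTwist_eq (lt_trans hab hbc),
    bpref_split a b c (by omega) (by omega), bpref_split a b (c-1) (by omega) (by omega)]
  have c1 : bpref n a (b-1) * bpref n b c = bpref n b c * bpref n a (b-1) :=
    bpref_bpref_comm (by omega)
  have c2 : bpref n a (b-1) * bpref n b (c-1) = bpref n b (c-1) * bpref n a (b-1) :=
    bpref_bpref_comm (by omega)
  calc bpref n a b * (bpref n a (b-1))⁻¹ * (bpref n b c * (bpref n b (c-1))⁻¹)
      = bpref n a b * (((bpref n a (b-1))⁻¹ * bpref n b c) * (bpref n b (c-1))⁻¹) := by group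
    _ = bpref n a b * ((bpref n b c * (bpref n a (b-1))⁻¹) * (bpref n b (c-1))⁻¹) := by
        rw [slide_inv c1]
    _ = bpref n a b * (bpref n b c * ((bpref n a (b-1))⁻¹ * (bpref n b (c-1))⁻¹)) := by group
    _ = bpref n a b * (bpref n b c * ((bpref n b (c-1))⁻¹ * (bpref n a (b-1))⁻¹)) := by
        rw [comm_inv_inv c2]
    _ = bpref n a b * bpref n b c * (bpref n a b * bpref n b (c-1))⁻¹ *
          (bpref n a b * (bpref n a (b-1))⁻¹) := by group

lemma slide_inv' {G : Type*} [Group G] {a x b : G} (h : a * x = x * b) :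
    x * b⁻¹ = a⁻¹ * x := (slide_inv h).symm

lemma braidT2 {n a b c : ℕ} (hab : a < b) (hbc : b < c) (hn : c < n) :
    halfTwist n a c * halfTwist n a b = halfTwist n b c * halfTwist n a c := by
  obtain ⟨β, rfl⟩ : ∃ x, b = x + 1 := ⟨b - 1, by omega⟩
  obtain ⟨δ, rfl⟩ : ∃ x, c = x + 2 := ⟨c - 2, by omega⟩
  rw [halfTwist_eq hab, halfTwist_eq hbc, halfTwist_eq (lt_trans hab hbc)]
  simp only [Nat.add_sub_cancel, show β + 1 - 1 = β from rfl, show δ + 2 - 1 = δ + 1 from rfl]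
  have e1 : bpref n (β+1) (δ+2) * bpref n a (δ+2) = bpref n a (δ+2) * bpref n β (δ+1) :=
    bpref_slide (by omega) (by omega) hn
  have e2 : bpref n (β+1) (δ+1) * bpref n a (δ+2) = bpref n a (δ+2) * bpref n β δ :=
    bpref_slide (by omega) (by omega) hn
  have e3 : bpref n (β+1) (δ+1) * bpref n β (δ+1) = bpref n β (δ+1) * bpref n β δ :=
    bpref_slide (by omega) (by omega) (by omega)
  have hZZ : bpref n β (δ+1) * (bpref n β δ)⁻¹ = (bpref n (β+1) (δ+1))⁻¹ * bpref n β (δ+1) :=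
    slide_inv' e3
  have hZX : bpref n β (δ+1) * (bpref n a (δ+1))⁻¹ = (bpref n a β)⁻¹ := by
    rw [bpref_split a β (δ+1) (by omega) (by omega)]; group
  have hY' : (bpref n (β+1) (δ+1))⁻¹ = (bpref n a (δ+1))⁻¹ * bpref n a (β+1) := by
    rw [bpref_split a (β+1) (δ+1) (by omega) (by omega)]; group
  symm
  calc bpref n (β+1) (δ+2) * (bpref n (β+1) (δ+1))⁻¹ *
        (bpref n a (δ+2) * (bpref n a (δ+1))⁻¹)
      = bpref n (β+1) (δ+2) * ((bpref n (β+1) (δ+1))⁻¹ * bpref n a (δ+2)) *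
        (bpref n a (δ+1))⁻¹ := by group
    _ = bpref n (β+1) (δ+2) * (bpref n a (δ+2) * (bpref n β δ)⁻¹) *
        (bpref n a (δ+1))⁻¹ := by rw [slide_inv e2]
    _ = (bpref n (β+1) (δ+2) * bpref n a (δ+2)) * ((bpref n β δ)⁻¹ *
        (bpref n a (δ+1))⁻¹) := by group
    _ = (bpref n a (δ+2) * bpref n β (δ+1)) * ((bpref n β δ)⁻¹ *
        (bpref n a (δ+1))⁻¹) := by rw [e1]
    _ = bpref n a (δ+2) * ((bpref n β (δ+1) * (bpref n β δ)⁻¹) *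
        (bpref n a (δ+1))⁻¹) := by group
    _ = bpref n a (δ+2) * (((bpref n (β+1) (δ+1))⁻¹ * bpref n β (δ+1)) *
        (bpref n a (δ+1))⁻¹) := by rw [hZZ]
    _ = bpref n a (δ+2) * ((bpref n (β+1) (δ+1))⁻¹ *
        (bpref n β (δ+1) * (bpref n a (δ+1))⁻¹)) := by group
    _ = bpref n a (δ+2) * ((bpref n (β+1) (δ+1))⁻¹ * (bpref n a β)⁻¹) := by rw [hZX]
    _ = bpref n a (δ+2) * (((bpref n a (δ+1))⁻¹ * bpref n a (β+1)) * (bpref n a β)⁻¹) := by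
        rw [hY']
    _ = bpref n a (δ+2) * (bpref n a (δ+1))⁻¹ * (bpref n a (β+1) * (bpref n a β)⁻¹) := by
        group

lemma braidC1 {n i j k l : ℕ} (hij : i < j) (hjk : j < k) (hkl : k < l) :
    halfTwist n i j * halfTwist n k l = halfTwist n k l * halfTwist n i j := by
  rw [halfTwist_eq hij, halfTwist_eq hkl]
  have a1 : Commute (bpref n i j) (bpref n k l) := bpref_bpref_comm hjk
  have a2 : Commute (bpref n i j) (bpref n k (l-1)) := bpref_bpref_comm hjk
  have a3 : Commute (bpref n i (j-1)) (bpref n k l) := bpref_bpref_comm (by omega)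
  have a4 : Commute (bpref n i (j-1)) (bpref n k (l-1)) := bpref_bpref_comm (by omega)
  exact ((a1.mul_right a2.inv_right).mul_left ((a3.mul_right a4.inv_right).inv_left))

lemma braidC2 {n i j k l : ℕ} (hik : i < k) (hkl : k < l) (hlj : l < j) (hn : j < n) :
    halfTwist n i j * halfTwist n k l = halfTwist n k l * halfTwist n i j := by
  obtain ⟨κ, rfl⟩ : ∃ x, k = x + 1 := ⟨k - 1, by omega⟩
  obtain ⟨μ, rfl⟩ : ∃ x, l = x + 1 := ⟨l - 1, by omega⟩
  have e1 : bpref n i (j-1) * halfTwist n κ μ * (bpref n i (j-1))⁻¹ = halfTwist n (κ+1) (μ+1) :=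
    bpref_conj_halfTwist (by omega) (by omega) (by omega) (by omega)
  have e2 : bpref n i j * halfTwist n κ μ * (bpref n i j)⁻¹ = halfTwist n (κ+1) (μ+1) :=
    bpref_conj_halfTwist (by omega) (by omega) (by omega) hn
  have key : halfTwist n i j * halfTwist n (κ+1) (μ+1) * (halfTwist n i j)⁻¹ =
      halfTwist n (κ+1) (μ+1) := by
    rw [halfTwist_eq (show i < j by omega)]
    nth_rewrite 1 [← e1]
    rw [← e2]
    group
  calc halfTwist n i j * halfTwist n (κ+1) (μ+1)
      = halfTwist n i j * halfTwist n (κ+1) (μ+1) * (halfTwist n i j)⁻¹ * halfTwist n i j := by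
        group
    _ = halfTwist n (κ+1) (μ+1) * halfTwist n i j := by rw [key]

lemma braidR1 {n a b c : ℕ} (hab : a < b) (hbc : b < c) (hn : c < n) :
    halfTwist n a b * halfTwist n b c * (halfTwist n a b)⁻¹ = halfTwist n a c := by
  rw [braidT1 hab hbc hn]; group

lemma braidR3 {n a b c : ℕ} (hab : a < b) (hbc : b < c) (hn : c < n) :
    halfTwist n a c * halfTwist n a b * (halfTwist n a c)⁻¹ = halfTwist n b c := by
  rw [braidT2 hab hbc hn]; group

lemma braidR2 {n a b c : ℕ} (hab : a < b) (hbc : b < c) (hn : c < n) :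
    halfTwist n b c * halfTwist n a c * (halfTwist n b c)⁻¹ = halfTwist n a b := by
  have h : halfTwist n b c * halfTwist n a c = halfTwist n a b * halfTwist n b c :=
    (braidT2 hab hbc hn).symm.trans (braidT1 hab hbc hn).symm
  rw [h]; group

lemma braidR1' {n a b c : ℕ} (hab : a < b) (hbc : b < c) (hn : c < n) :
    halfTwist n a b * halfTwist n a c * (halfTwist n a b)⁻¹ =
      halfTwist n a b ^ 2 * halfTwist n b c * (halfTwist n a b ^ 2)⁻¹ := by
  rw [← braidR1 hab hbc hn, sq]; group

lemma braidR2' {n a b c : ℕ} (hab : a < b) (hbc : b < c) (hn : c < n) :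
    halfTwist n b c * halfTwist n a b * (halfTwist n b c)⁻¹ =
      halfTwist n b c ^ 2 * halfTwist n a c * (halfTwist n b c ^ 2)⁻¹ := by
  rw [← braidR2 hab hbc hn, sq]; group

lemma braidR3' {n a b c : ℕ} (hab : a < b) (hbc : b < c) (hn : c < n) :
    halfTwist n a c * halfTwist n b c * (halfTwist n a c)⁻¹ =
      halfTwist n a c ^ 2 * halfTwist n a b * (halfTwist n a c ^ 2)⁻¹ := by
  rw [← braidR3 hab hbc hn, sq]; group

section PiLemmas
variable {n : ℕ} {π : BraidGroup n →* Equiv.Perm (Fin n)} (hgen : IsBraidProj n π)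
include hgen

lemma pi_bgen {t : ℕ} (h : t < n - 1) :
    π (bgen n t) = Equiv.swap ⟨t, by omega⟩ ⟨t + 1, by omega⟩ := by
  rw [bgen, dif_pos h]
  exact hgen ⟨t, h⟩

lemma pi_bpref_fix {i j m : ℕ} (h : m < i ∨ j < m) (hm : m < n) :
    π (bpref n i j) ⟨m, hm⟩ = ⟨m, hm⟩ := by
  induction j with
  | zero => rw [bpref_of_le (Nat.zero_le i)]; simp
  | succ j ih =>
    by_cases hij : i ≤ j
    · rw [bpref_succ hij, map_mul, Equiv.Perm.mul_apply]
      by_cases hjr : j < n - 1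
      · rw [pi_bgen hgen hjr, Equiv.swap_apply_of_ne_of_ne]
        · exact ih (by omega)
        · simp only [ne_eq, Fin.mk.injEq]; omega
        · simp only [ne_eq, Fin.mk.injEq]; omega
      · rw [bgen, dif_neg hjr, map_one, Equiv.Perm.one_apply]
        exact ih (by omega)
    · rw [bpref_of_le (by omega)]; simp

lemma pi_bpref_last {i j : ℕ} (hij : i ≤ j) (hj : j < n) :
    π (bpref n i j) ⟨j, hj⟩ = ⟨i, by omega⟩ := by
  induction j with
  | zero =>
    have : i = 0 := by omega
    subst this
    rw [bpref_self]; simp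
  | succ j ih =>
    by_cases hij2 : i ≤ j
    · rw [bpref_succ hij2, map_mul, Equiv.Perm.mul_apply, pi_bgen hgen (by omega)]
      rw [show Equiv.swap (⟨j, by omega⟩ : Fin n) ⟨j+1, by omega⟩ ⟨j+1, hj⟩ =
        ⟨j, by omega⟩ from Equiv.swap_apply_right _ _]
      exact ih hij2 (by omega)
    · have : i = j + 1 := by omega
      subst this
      rw [bpref_self]; simp

lemma pi_halfTwist {i j : ℕ} (hij : i < j) (hj : j < n) :
    π (halfTwist n i j) = Equiv.swap ⟨i, by omega⟩ ⟨j, hj⟩ := by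
  rw [halfTwist, map_mul, map_mul, map_inv, pi_bgen hgen (show j - 1 < n - 1 by omega)]
  have h1 : (⟨(j-1) + 1, by omega⟩ : Fin n) = ⟨j, hj⟩ := by
    simp only [Fin.mk.injEq]; omega
  rw [h1]
  rw [← Equiv.swap_apply_apply]
  congr 1
  · exact pi_bpref_last hgen (by omega) (by omega)
  · exact pi_bpref_fix hgen (by omega) hj
end PiLemmas

lemma bb_symm {n : ℕ} (i j : ℕ) : bb n i j = bb n j i := by
  rw [bb, bb, min_comm, max_comm]

lemma bb_eq {n i j : ℕ} (h : i < j) : bb n i j = halfTwist n i j := by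
  rw [bb, min_eq_left h.le, max_eq_right h.le]

lemma halfTwist_adj {n t : ℕ} : halfTwist n t (t+1) = bgen n t := by
  rw [halfTwist, Nat.add_sub_cancel, bpref_self]; group

section GqLemmas
variable {n : ℕ} {π : BraidGroup n →* Equiv.Perm (Fin n)} (hgen : IsBraidProj n π)

open scoped commutatorElement in
lemma gq_comm (x y : BraidGroup n) (hx : π x = 1) (hy : π y = 1) :
    (QuotientGroup.mk x : Gq n π) * QuotientGroup.mk y =
      QuotientGroup.mk y * QuotientGroup.mk x := by
  have hmem : ⁅x, y⁆ ∈ (⁅π.ker, π.ker⁆ : Subgroup (BraidGroup n)) :=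
    Subgroup.commutator_mem_commutator (MonoidHom.mem_ker.2 hx) (MonoidHom.mem_ker.2 hy)
  have h1 : (QuotientGroup.mk ⁅x, y⁆ : Gq n π) = 1 := (QuotientGroup.eq_one_iff _).2 hmem
  rw [commutatorElement_def] at h1
  simp only [QuotientGroup.mk_mul, QuotientGroup.mk_inv] at h1
  apply mul_inv_eq_one.mp
  rw [mul_inv_rev, ← mul_assoc]
  exact h1

lemma gq_conj_eq (x y : BraidGroup n) (hx : π x = 1) (hy : π y = 1) :
    (QuotientGroup.mk (x * y * x⁻¹) : Gq n π) = QuotientGroup.mk y := by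
  simp only [QuotientGroup.mk_mul, QuotientGroup.mk_inv]
  rw [gq_comm x y hx hy]
  group

include hgen

lemma pi_bb {p q : Fin n} (hpq : p ≠ q) : π (bb n p q) = Equiv.swap p q := by
  rcases lt_or_gt_of_ne hpq with h | h
  · rw [bb_eq (show (p:ℕ) < (q:ℕ) from h), pi_halfTwist hgen h q.2]
  · rw [bb_symm, bb_eq (show (q:ℕ) < (p:ℕ) from h), pi_halfTwist hgen h p.2,
      Equiv.swap_comm]

lemma pi_bb_sq {p q : Fin n} (hpq : p ≠ q) : π ((bb n p q) ^ 2) = 1 := by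
  rw [map_pow, pi_bb hgen hpq, sq, Equiv.swap_mul_self]

end GqLemmas

lemma conj_sq {G : Type*} [Group G] (a x : G) : a * x^2 * a⁻¹ = (a*x*a⁻¹)^2 := by
  rw [sq, sq]; group

lemma conj_sq_of_comm {G : Type*} [Group G] {a x : G} (h : a * x = x * a) :
    a * x^2 * a⁻¹ = x^2 := by
  rw [sq]
  calc a * (x*x) * a⁻¹ = (a*x)*x*a⁻¹ := by group
    _ = (x*a)*x*a⁻¹ := by rw [h]
    _ = x*(a*x)*a⁻¹ := by group
    _ = x*(x*a)*a⁻¹ := by rw [h]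
    _ = x*x := by group

section ActLemmas
variable {n : ℕ} {π : BraidGroup n →* Equiv.Perm (Fin n)} (hgen : IsBraidProj n π)
include hgen

lemma pi_ht_sq {i j : ℕ} (hij : i < j) (hj : j < n) : π (halfTwist n i j ^ 2) = 1 := by
  rw [map_pow, pi_halfTwist hgen hij hj, sq, Equiv.swap_mul_self]

lemma act_gen' (T : ℕ) (hT : T < n - 1) (p q : Fin n) (hpq : (p:ℕ) < (q:ℕ)) :
    (QuotientGroup.mk (bgen n T) : Gq n π) * ft n π p q *
      (QuotientGroup.mk (bgen n T))⁻¹ =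
      ft n π (π (bgen n T) p) (π (bgen n T) q) := by
  have hqn : (q:ℕ) < n := q.2
  have hpig := pi_bgen (n := n) hgen hT
  simp only [ft, bb_eq hpq, ← QuotientGroup.mk_inv, ← QuotientGroup.mk_mul]
  by_cases hc1 : (q:ℕ) < T ∨ T + 1 < (p:ℕ) ∨ ((p:ℕ) < T ∧ T + 1 < (q:ℕ))
  · -- commuting case, p q fixed by the swap
    have hcomm : bgen n T * halfTwist n p q = halfTwist n p q * bgen n T := by
      rw [← halfTwist_adj]
      rcases hc1 with h | h | h
      · exact (braidC1 hpq h (by omega)).symm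
      · exact braidC1 (by omega) h hpq
      · exact (braidC2 h.1 (by omega) h.2 hqn).symm
    rw [conj_sq_of_comm hcomm]
    have hp' : ((π (bgen n T)) p : ℕ) = (p:ℕ) := by
      rw [hpig, Equiv.swap_apply_of_ne_of_ne (Fin.ne_of_val_ne (show (p:ℕ) ≠ T by omega))
        (Fin.ne_of_val_ne (show (p:ℕ) ≠ T+1 by omega))]
    have hq' : ((π (bgen n T)) q : ℕ) = (q:ℕ) := by
      rw [hpig, Equiv.swap_apply_of_ne_of_ne (Fin.ne_of_val_ne (show (q:ℕ) ≠ T by omega))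
        (Fin.ne_of_val_ne (show (q:ℕ) ≠ T+1 by omega))]
    rw [hp', hq', bb_eq hpq]
  · by_cases hc2 : (p:ℕ) = T ∧ (q:ℕ) = T+1
    · obtain ⟨hp1, hq1⟩ := hc2
      have hp' : ((π (bgen n T)) p : ℕ) = (q:ℕ) := by
        rw [hpig, show p = (⟨T, by omega⟩ : Fin n) from Fin.ext hp1, Equiv.swap_apply_left,
          hq1]
      have hq' : ((π (bgen n T)) q : ℕ) = (p:ℕ) := by
        rw [hpig, show q = (⟨T+1, by omega⟩ : Fin n) from Fin.ext hq1,
          Equiv.swap_apply_right, hp1]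
      rw [hp', hq', bb_symm, bb_eq hpq]
      have hσ : bgen n T = halfTwist n p q := by
        rw [hp1, hq1, ← halfTwist_adj]
      rw [hσ, conj_sq_of_comm rfl]
    · by_cases hc3 : (q:ℕ) = T
      · have hpT : (p:ℕ) < T := by omega
        have key : bgen n T * halfTwist n p q ^ 2 * (bgen n T)⁻¹ =
            halfTwist n T (T+1) ^ 2 * halfTwist n (p:ℕ) (T+1) ^ 2 *
              (halfTwist n T (T+1) ^ 2)⁻¹ := by
          rw [conj_sq, ← halfTwist_adj, hc3,
            braidR2' hpT (by omega) (show T+1 < n by omega)]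
          exact (conj_sq _ _).symm
        rw [key, gq_conj_eq _ _ (pi_ht_sq hgen (by omega) (by omega))
          (pi_ht_sq hgen (by omega) (by omega))]
        have hp' : ((π (bgen n T)) p : ℕ) = (p:ℕ) := by
          rw [hpig, Equiv.swap_apply_of_ne_of_ne (Fin.ne_of_val_ne (show (p:ℕ) ≠ T by omega))
            (Fin.ne_of_val_ne (show (p:ℕ) ≠ T+1 by omega))]
        have hq' : ((π (bgen n T)) q : ℕ) = T+1 := by
          rw [hpig, show q = (⟨T, by omega⟩ : Fin n) from Fin.ext hc3, Equiv.swap_apply_left]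
        rw [hp', hq', bb_eq (show (p:ℕ) < T+1 by omega)]
      · by_cases hc4 : (q:ℕ) = T+1
        · have hpT : (p:ℕ) < T := by omega
          have key : bgen n T * halfTwist n p q ^ 2 * (bgen n T)⁻¹ =
              halfTwist n (p:ℕ) T ^ 2 := by
            rw [conj_sq, ← halfTwist_adj, hc4, braidR2 hpT (by omega) (by omega)]
          rw [key]
          have hp' : ((π (bgen n T)) p : ℕ) = (p:ℕ) := by
            rw [hpig, Equiv.swap_apply_of_ne_of_ne
              (Fin.ne_of_val_ne (show (p:ℕ) ≠ T by omega))
              (Fin.ne_of_val_ne (show (p:ℕ) ≠ T+1 by omega))]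
          have hq' : ((π (bgen n T)) q : ℕ) = T := by
            rw [hpig, show q = (⟨T+1, by omega⟩ : Fin n) from Fin.ext hc4,
              Equiv.swap_apply_right]
          rw [hp', hq', bb_eq (show (p:ℕ) < T by omega)]
        · by_cases hc5 : (p:ℕ) = T
          · have hqT : T + 1 < (q:ℕ) := by omega
            have key : bgen n T * halfTwist n p q ^ 2 * (bgen n T)⁻¹ =
                halfTwist n T (T+1) ^ 2 * halfTwist n (T+1) (q:ℕ) ^ 2 *
                  (halfTwist n T (T+1) ^ 2)⁻¹ := by
              rw [conj_sq, ← halfTwist_adj, hc5, braidR1' (by omega) hqT hqn]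
              exact (conj_sq _ _).symm
            rw [key, gq_conj_eq _ _ (pi_ht_sq hgen (by omega) (by omega))
              (pi_ht_sq hgen (by omega) hqn)]
            have hp' : ((π (bgen n T)) p : ℕ) = T+1 := by
              rw [hpig, show p = (⟨T, by omega⟩ : Fin n) from Fin.ext hc5,
                Equiv.swap_apply_left]
            have hq' : ((π (bgen n T)) q : ℕ) = (q:ℕ) := by
              rw [hpig, Equiv.swap_apply_of_ne_of_ne
                (Fin.ne_of_val_ne (show (q:ℕ) ≠ T by omega))
                (Fin.ne_of_val_ne (show (q:ℕ) ≠ T+1 by omega))]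
            rw [hp', hq', bb_eq (show T+1 < (q:ℕ) by omega)]
          · have hc6 : (p:ℕ) = T+1 := by omega
            have hqT : T + 1 < (q:ℕ) := by omega
            have key : bgen n T * halfTwist n p q ^ 2 * (bgen n T)⁻¹ =
                halfTwist n T (q:ℕ) ^ 2 := by
              rw [conj_sq, ← halfTwist_adj, hc6, braidR1 (by omega) hqT hqn]
            rw [key]
            have hp' : ((π (bgen n T)) p : ℕ) = T := by
              rw [hpig, show p = (⟨T+1, by omega⟩ : Fin n) from Fin.ext hc6,
                Equiv.swap_apply_right]
            have hq' : ((π (bgen n T)) q : ℕ) = (q:ℕ) := by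
              rw [hpig, Equiv.swap_apply_of_ne_of_ne
                (Fin.ne_of_val_ne (show (q:ℕ) ≠ T by omega))
                (Fin.ne_of_val_ne (show (q:ℕ) ≠ T+1 by omega))]
            rw [hp', hq', bb_eq (show T < (q:ℕ) by omega)]
end ActLemmas

lemma ft_symm {n : ℕ} {π : BraidGroup n →* Equiv.Perm (Fin n)} (i j : ℕ) :
    ft n π i j = ft n π j i := by rw [ft, ft, bb_symm]

section ActMain
variable {n : ℕ} {π : BraidGroup n →* Equiv.Perm (Fin n)} (hgen : IsBraidProj n π)

lemma act_closed_mul (x y : BraidGroup n)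
    (hx : ∀ p q : Fin n, p ≠ q → (QuotientGroup.mk x : Gq n π) * ft n π p q *
      (QuotientGroup.mk x)⁻¹ = ft n π (π x p) (π x q))
    (hy : ∀ p q : Fin n, p ≠ q → (QuotientGroup.mk y : Gq n π) * ft n π p q *
      (QuotientGroup.mk y)⁻¹ = ft n π (π y p) (π y q))
    (p q : Fin n) (hpq : p ≠ q) :
    (QuotientGroup.mk (x * y) : Gq n π) * ft n π p q * (QuotientGroup.mk (x * y))⁻¹ =
      ft n π (π (x * y) p) (π (x * y) q) := by
  have hne : π y p ≠ π y q := fun hc => hpq ((π y).injective hc)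
  have h1 := hy p q hpq
  have h2 := hx (π y p) (π y q) hne
  rw [QuotientGroup.mk_mul]
  calc (QuotientGroup.mk x : Gq n π) * QuotientGroup.mk y * ft n π p q *
        (QuotientGroup.mk x * QuotientGroup.mk y)⁻¹
      = QuotientGroup.mk x * (QuotientGroup.mk y * ft n π p q * (QuotientGroup.mk y)⁻¹) *
        (QuotientGroup.mk x)⁻¹ := by group
    _ = QuotientGroup.mk x * ft n π (π y p) (π y q) * (QuotientGroup.mk x)⁻¹ := by rw [h1]
    _ = ft n π (π x (π y p)) (π x (π y q)) := h2
    _ = ft n π (π (x * y) p) (π (x * y) q) := by rw [map_mul, Equiv.Perm.mul_apply,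
        Equiv.Perm.mul_apply]

lemma act_closed_inv (x : BraidGroup n)
    (hx : ∀ p q : Fin n, p ≠ q → (QuotientGroup.mk x : Gq n π) * ft n π p q *
      (QuotientGroup.mk x)⁻¹ = ft n π (π x p) (π x q))
    (p q : Fin n) (hpq : p ≠ q) :
    (QuotientGroup.mk x⁻¹ : Gq n π) * ft n π p q * (QuotientGroup.mk x⁻¹)⁻¹ =
      ft n π (π x⁻¹ p) (π x⁻¹ q) := by
  have hne : (π x)⁻¹ p ≠ (π x)⁻¹ q := fun hc => hpq (((π x)⁻¹).injective hc)
  have h2 := hx ((π x)⁻¹ p) ((π x)⁻¹ q) hne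
  simp only [← Equiv.Perm.mul_apply, mul_inv_cancel, Equiv.Perm.one_apply] at h2
  simp only [QuotientGroup.mk_inv, map_inv]
  rw [← h2]
  group

include hgen in
lemma act (x : BraidGroup n) (p q : Fin n) (hpq : p ≠ q) :
    (QuotientGroup.mk x : Gq n π) * ft n π p q * (QuotientGroup.mk x)⁻¹ =
      ft n π (π x p) (π x q) := by
  revert p q
  refine PresentedGroup.induction_on
    (C := fun (g : BraidGroup n) => ∀ p q : Fin n, p ≠ q →
      (QuotientGroup.mk g : Gq n π) * ft n π p q * (QuotientGroup.mk g)⁻¹ =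
        ft n π (π g p) (π g q)) x ?_
  intro z
  induction z using FreeGroup.induction_on with
  | C1 =>
    intro p q hpq
    simp only [map_one]
    simp
  | of i =>
    intro p q hpq
    have hb : (PresentedGroup.mk (braidRels n)) (FreeGroup.of i) = bgen n (i:ℕ) := by
      rw [bgen, dif_pos i.2]
      rfl
    rw [show (FreeGroup.of i : FreeGroup (Fin (n-1))) = pure i from rfl] at hb
    rw [show (PresentedGroup.mk (braidRels n)) (FreeGroup.of i) = bgen n (i:ℕ) from hb]
    rcases lt_or_gt_of_ne hpq with h | h
    · exact act_gen' hgen (i:ℕ) i.2 p q h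
    · rw [ft_symm, act_gen' hgen (i:ℕ) i.2 q p h, ft_symm]
  | inv_of i ih =>
    have := act_closed_inv ((PresentedGroup.mk (braidRels n)) (pure i)) (fun p q h => ih p q h)
    intro p q hpq
    have h2 := this p q hpq
    rw [← map_inv] at h2
    exact h2
  | mul a b iha ihb =>
    intro p q hpq
    have := act_closed_mul ((PresentedGroup.mk (braidRels n)) a)
      ((PresentedGroup.mk (braidRels n)) b) (fun p q h => iha p q h)
      (fun p q h => ihb p q h) p q hpq
    rw [← map_mul] at this
    exact this
end ActMain

lemma swap_val {n r s p : ℕ} (hr : r < n) (hs : s < n) (hp : p < n) :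
    (((Equiv.swap (⟨r, hr⟩ : Fin n) ⟨s, hs⟩) ⟨p, hp⟩ : Fin n) : ℕ) =
      if p = r then s else if p = s then r else p := by
  split_ifs with h1 h2
  · subst h1; rw [Equiv.swap_apply_left]
  · subst h2; rw [Equiv.swap_apply_right]
  · rw [Equiv.swap_apply_of_ne_of_ne (Fin.ne_of_val_ne h1) (Fin.ne_of_val_ne h2)]

section PushLemmas
variable {n : ℕ} {π : BraidGroup n →* Equiv.Perm (Fin n)} (hgen : IsBraidProj n π)

lemma ft_eq {p q : ℕ} (h : p < q) :
    ft n π p q = QuotientGroup.mk (halfTwist n p q ^ 2) := by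
  rw [ft, bb_eq h]

include hgen

lemma ft_comm' {p q r s : ℕ} (hpq : p ≠ q) (hp : p < n) (hq : q < n)
    (hrs : r ≠ s) (hr : r < n) (hs : s < n) :
    ft n π p q * ft n π r s = ft n π r s * ft n π p q := by
  exact gq_comm _ _
    (pi_bb_sq hgen (p := ⟨p, hp⟩) (q := ⟨q, hq⟩) (Fin.ne_of_val_ne hpq))
    (pi_bb_sq hgen (p := ⟨r, hr⟩) (q := ⟨s, hs⟩) (Fin.ne_of_val_ne hrs))

lemma ft_conj {p q r s p' q' : ℕ} (hp : p < n) (hq : q < n) (hpq : p ≠ q)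
    (hrs : r < s) (hsn : s < n)
    (hp' : p' = if p = r then s else if p = s then r else p)
    (hq' : q' = if q = r then s else if q = s then r else q) :
    QuotientGroup.mk (halfTwist n r s) * ft n π p q *
      (QuotientGroup.mk (halfTwist n r s) : Gq n π)⁻¹ = ft n π p' q' := by
  have h := act hgen (halfTwist n r s) ⟨p, hp⟩ ⟨q, hq⟩ (Fin.ne_of_val_ne hpq)
  rw [pi_halfTwist hgen hrs hsn] at h
  rw [show ft n π p q = ft n π ((⟨p, hp⟩ : Fin n) : ℕ) ((⟨q, hq⟩ : Fin n) : ℕ) from rfl]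
  rw [h, swap_val, swap_val, ← hp', ← hq']

lemma ft_push {p q r s p' q' : ℕ} (hp : p < n) (hq : q < n) (hpq : p ≠ q)
    (hrs : r < s) (hsn : s < n)
    (hp' : p' = if p = r then s else if p = s then r else p)
    (hq' : q' = if q = r then s else if q = s then r else q) :
    ft n π p q * QuotientGroup.mk (halfTwist n r s) =
      (QuotientGroup.mk (halfTwist n r s) : Gq n π) * ft n π p' q' := by
  have hpn' : p' < n := by split_ifs at hp' <;> omega
  have hqn' : q' < n := by split_ifs at hq' <;> omega
  have hpq' : p' ≠ q' := by split_ifs at hp' hq' <;> omega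
  have hp2 : p = if p' = r then s else if p' = s then r else p' := by
    split_ifs at hp' ⊢ <;> omega
  have hq2 : q = if q' = r then s else if q' = s then r else q' := by
    split_ifs at hq' ⊢ <;> omega
  have h := ft_conj hgen hpn' hqn' hpq' hrs hsn hp2 hq2
  rw [← h]; group

lemma ft_pushW {p q r s p' q' : ℕ} (hp : p < n) (hq : q < n) (hpq : p ≠ q)
    (hrs : r < s) (hsn : s < n)
    (hp' : p' = if p = r then s else if p = s then r else p)
    (hq' : q' = if q = r then s else if q = s then r else q) :
    ft n π p q * (QuotientGroup.mk (halfTwist n r s) : Gq n π)⁻¹ =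
      (QuotientGroup.mk (halfTwist n r s) : Gq n π)⁻¹ * ft n π p' q' := by
  have h := ft_conj hgen hp hq hpq hrs hsn hp' hq'
  rw [← h]; group

lemma ft_push_inv {p q r s p' q' : ℕ} (hp : p < n) (hq : q < n) (hpq : p ≠ q)
    (hrs : r < s) (hsn : s < n)
    (hp' : p' = if p = r then s else if p = s then r else p)
    (hq' : q' = if q = r then s else if q = s then r else q) :
    (ft n π p q)⁻¹ * QuotientGroup.mk (halfTwist n r s) =
      (QuotientGroup.mk (halfTwist n r s) : Gq n π) * (ft n π p' q')⁻¹ :=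
  slide_inv (ft_push hgen hp hq hpq hrs hsn hp' hq')

lemma ft_pushW_inv {p q r s p' q' : ℕ} (hp : p < n) (hq : q < n) (hpq : p ≠ q)
    (hrs : r < s) (hsn : s < n)
    (hp' : p' = if p = r then s else if p = s then r else p)
    (hq' : q' = if q = r then s else if q = s then r else q) :
    (ft n π p q)⁻¹ * (QuotientGroup.mk (halfTwist n r s) : Gq n π)⁻¹ =
      (QuotientGroup.mk (halfTwist n r s) : Gq n π)⁻¹ * (ft n π p' q')⁻¹ :=
  slide_inv (ft_pushW hgen hp hq hpq hrs hsn hp' hq')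

end PushLemmas

section ZqLemmas
variable {n : ℕ} {π : BraidGroup n →* Equiv.Perm (Fin n)} (hgen : IsBraidProj n π)

lemma zq_sq {p q : ℕ} (h : p < q) (hq : q < n) :
    (QuotientGroup.mk (ft n π p q) : Zq n π) ^ 2 = 1 := by
  rw [← QuotientGroup.mk_pow]
  rw [QuotientGroup.eq_one_iff]
  exact Subgroup.subset_normalClosure ⟨p, q, h, hq, rfl⟩

lemma zq_inv_drop {p q : ℕ} (h : p < q) (hq : q < n) :
    (QuotientGroup.mk (ft n π p q) : Zq n π)⁻¹ = QuotientGroup.mk (ft n π p q) := by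
  have h2 := zq_sq (π := π) h hq
  rw [sq] at h2
  exact inv_eq_of_mul_eq_one_left h2

include hgen

lemma zq_tri1 {a b c : ℕ} (hab : a < b) (hbc : b < c) (hcn : c < n) :
    (QuotientGroup.mk (QuotientGroup.mk (halfTwist n a c * halfTwist n b c *
        (halfTwist n a c)⁻¹ * (halfTwist n a b)⁻¹) : Gq n π) : Zq n π) =
      QuotientGroup.mk (ft n π a c) * QuotientGroup.mk (ft n π b c) := by
  have e := braidR3' hab hbc hcn
  have gq : (QuotientGroup.mk (halfTwist n a c * halfTwist n b c *
      (halfTwist n a c)⁻¹ * (halfTwist n a b)⁻¹) : Gq n π) =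
      ft n π a c * (ft n π b c)⁻¹ := by
    rw [e]
    simp only [QuotientGroup.mk_mul, QuotientGroup.mk_inv, ← ft_eq (lt_trans hab hbc)]
    have push := ft_pushW_inv hgen (p := a) (q := c) (p' := b) (q' := c)
      (by omega) (by omega) (by omega) hab (by omega)
      (by rw [if_pos rfl]) (by rw [if_neg (by omega), if_neg (by omega)])
    calc ft n π a c * QuotientGroup.mk (halfTwist n a b) * (ft n π a c)⁻¹ *
          (QuotientGroup.mk (halfTwist n a b))⁻¹
        = ft n π a c * QuotientGroup.mk (halfTwist n a b) *
          ((ft n π a c)⁻¹ * (QuotientGroup.mk (halfTwist n a b) : Gq n π)⁻¹) := by group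
      _ = ft n π a c * QuotientGroup.mk (halfTwist n a b) *
          ((QuotientGroup.mk (halfTwist n a b) : Gq n π)⁻¹ * (ft n π b c)⁻¹) := by rw [push]
      _ = ft n π a c * (ft n π b c)⁻¹ := by group
  rw [gq, QuotientGroup.mk_mul, QuotientGroup.mk_inv, zq_inv_drop hbc hcn]

lemma zq_tri2 {a b c : ℕ} (hab : a < b) (hbc : b < c) (hcn : c < n) :
    (QuotientGroup.mk (QuotientGroup.mk (halfTwist n a b * halfTwist n a c *
        (halfTwist n a b)⁻¹ * (halfTwist n b c)⁻¹) : Gq n π) : Zq n π) =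
      QuotientGroup.mk (ft n π a b) * QuotientGroup.mk (ft n π a c) := by
  have e := braidR1' hab hbc hcn
  have gq : (QuotientGroup.mk (halfTwist n a b * halfTwist n a c *
      (halfTwist n a b)⁻¹ * (halfTwist n b c)⁻¹) : Gq n π) =
      ft n π a b * (ft n π a c)⁻¹ := by
    rw [e]
    simp only [QuotientGroup.mk_mul, QuotientGroup.mk_inv, ← ft_eq hab]
    have push := ft_pushW_inv hgen (p := a) (q := b) (p' := a) (q' := c)
      (by omega) (by omega) (by omega) hbc (by omega)
      (by rw [if_neg (by omega), if_neg (by omega)]) (by rw [if_pos rfl])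
    calc ft n π a b * QuotientGroup.mk (halfTwist n b c) * (ft n π a b)⁻¹ *
          (QuotientGroup.mk (halfTwist n b c))⁻¹
        = ft n π a b * QuotientGroup.mk (halfTwist n b c) *
          ((ft n π a b)⁻¹ * (QuotientGroup.mk (halfTwist n b c) : Gq n π)⁻¹) := by group
      _ = ft n π a b * QuotientGroup.mk (halfTwist n b c) *
          ((QuotientGroup.mk (halfTwist n b c) : Gq n π)⁻¹ * (ft n π a c)⁻¹) := by rw [push]
      _ = ft n π a b * (ft n π a c)⁻¹ := by group
  rw [gq, QuotientGroup.mk_mul, QuotientGroup.mk_inv, zq_inv_drop (lt_trans hab hbc) hcn]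

lemma zq_tri3 {a b c : ℕ} (hab : a < b) (hbc : b < c) (hcn : c < n) :
    (QuotientGroup.mk (QuotientGroup.mk (halfTwist n b c * halfTwist n a b *
        (halfTwist n b c)⁻¹ * (halfTwist n a c)⁻¹) : Gq n π) : Zq n π) =
      QuotientGroup.mk (ft n π b c) * QuotientGroup.mk (ft n π a b) := by
  have e := braidR2' hab hbc hcn
  have gq : (QuotientGroup.mk (halfTwist n b c * halfTwist n a b *
      (halfTwist n b c)⁻¹ * (halfTwist n a c)⁻¹) : Gq n π) =
      ft n π b c * (ft n π a b)⁻¹ := by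
    rw [e]
    simp only [QuotientGroup.mk_mul, QuotientGroup.mk_inv, ← ft_eq hbc]
    have push := ft_pushW_inv hgen (p := b) (q := c) (p' := b) (q' := a)
      (by omega) (by omega) (by omega) (lt_trans hab hbc) (by omega)
      (by rw [if_neg (by omega), if_neg (by omega)]) (by rw [if_pos rfl, if_neg (by omega)])
    calc ft n π b c * QuotientGroup.mk (halfTwist n a c) * (ft n π b c)⁻¹ *
          (QuotientGroup.mk (halfTwist n a c))⁻¹
        = ft n π b c * QuotientGroup.mk (halfTwist n a c) *
          ((ft n π b c)⁻¹ * (QuotientGroup.mk (halfTwist n a c) : Gq n π)⁻¹) := by group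
      _ = ft n π b c * QuotientGroup.mk (halfTwist n a c) *
          ((QuotientGroup.mk (halfTwist n a c) : Gq n π)⁻¹ * (ft n π b a)⁻¹) := by rw [push]
      _ = ft n π b c * (ft n π b a)⁻¹ := by group
    rw [ft_symm b a]
  rw [gq, QuotientGroup.mk_mul, QuotientGroup.mk_inv, zq_inv_drop hab (by omega)]

end ZqLemmas

lemma abstract_interleave {G : Type*} [Group G] {kac kab kad kbc kdc B D V : G}
    (p1 : kac⁻¹ * D = D * kdc⁻¹)
    (p2 : kac * B⁻¹ = B⁻¹ * kbc)
    (p3 : kdc⁻¹ * B⁻¹ = B⁻¹ * kdc⁻¹)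
    (p4 : B * D * B⁻¹ = kab * V * kab⁻¹)
    (p5 : kab⁻¹ * V⁻¹ = V⁻¹ * kad⁻¹)
    (p6 : kdc⁻¹ * V⁻¹ = V⁻¹ * kbc⁻¹)
    (p7 : kbc * V⁻¹ = V⁻¹ * kdc)
    (p8 : kac⁻¹ * V⁻¹ = V⁻¹ * kac⁻¹)
    (c1 : kad⁻¹ * kbc⁻¹ = kbc⁻¹ * kad⁻¹)
    (c2 : kdc * kac⁻¹ = kac⁻¹ * kdc)
    (c3 : kad⁻¹ * kac⁻¹ = kac⁻¹ * kad⁻¹)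
    (c4 : kbc⁻¹ * kac⁻¹ = kac⁻¹ * kbc⁻¹)
    (c5 : kab * kac⁻¹ = kac⁻¹ * kab) :
    kac * B * kac⁻¹ * D * (kac * B * kac⁻¹)⁻¹ * V⁻¹ = kab * kbc⁻¹ * kad⁻¹ * kdc := by
  calc kac * B * kac⁻¹ * D * (kac * B * kac⁻¹)⁻¹ * V⁻¹
      = kac * B * (kac⁻¹ * D) * kac * B⁻¹ * kac⁻¹ * V⁻¹ := by group
    _ = kac * B * (D * kdc⁻¹) * kac * B⁻¹ * kac⁻¹ * V⁻¹ := by rw [p1]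
    _ = kac * B * D * kdc⁻¹ * (kac * B⁻¹) * kac⁻¹ * V⁻¹ := by group
    _ = kac * B * D * kdc⁻¹ * (B⁻¹ * kbc) * kac⁻¹ * V⁻¹ := by rw [p2]
    _ = kac * B * D * (kdc⁻¹ * B⁻¹) * kbc * kac⁻¹ * V⁻¹ := by group
    _ = kac * B * D * (B⁻¹ * kdc⁻¹) * kbc * kac⁻¹ * V⁻¹ := by rw [p3]
    _ = kac * (B * D * B⁻¹) * kdc⁻¹ * kbc * kac⁻¹ * V⁻¹ := by group
    _ = kac * (kab * V * kab⁻¹) * kdc⁻¹ * kbc * kac⁻¹ * V⁻¹ := by rw [p4]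
    _ = kac * kab * V * kab⁻¹ * kdc⁻¹ * kbc * (kac⁻¹ * V⁻¹) := by group
    _ = kac * kab * V * kab⁻¹ * kdc⁻¹ * kbc * (V⁻¹ * kac⁻¹) := by rw [p8]
    _ = kac * kab * V * kab⁻¹ * kdc⁻¹ * (kbc * V⁻¹) * kac⁻¹ := by group
    _ = kac * kab * V * kab⁻¹ * kdc⁻¹ * (V⁻¹ * kdc) * kac⁻¹ := by rw [p7]
    _ = kac * kab * V * kab⁻¹ * (kdc⁻¹ * V⁻¹) * kdc * kac⁻¹ := by group
    _ = kac * kab * V * kab⁻¹ * (V⁻¹ * kbc⁻¹) * kdc * kac⁻¹ := by rw [p6]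
    _ = kac * kab * V * (kab⁻¹ * V⁻¹) * kbc⁻¹ * kdc * kac⁻¹ := by group
    _ = kac * kab * V * (V⁻¹ * kad⁻¹) * kbc⁻¹ * kdc * kac⁻¹ := by rw [p5]
    _ = kac * kab * (kad⁻¹ * kbc⁻¹) * kdc * kac⁻¹ := by group
    _ = kac * kab * (kbc⁻¹ * kad⁻¹) * kdc * kac⁻¹ := by rw [c1]
    _ = kac * kab * kbc⁻¹ * kad⁻¹ * (kdc * kac⁻¹) := by group
    _ = kac * kab * kbc⁻¹ * kad⁻¹ * (kac⁻¹ * kdc) := by rw [c2]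
    _ = kac * kab * kbc⁻¹ * (kad⁻¹ * kac⁻¹) * kdc := by group
    _ = kac * kab * kbc⁻¹ * (kac⁻¹ * kad⁻¹) * kdc := by rw [c3]
    _ = kac * kab * (kbc⁻¹ * kac⁻¹) * kad⁻¹ * kdc := by group
    _ = kac * kab * (kac⁻¹ * kbc⁻¹) * kad⁻¹ * kdc := by rw [c4]
    _ = kac * (kab * kac⁻¹) * kbc⁻¹ * kad⁻¹ * kdc := by group
    _ = kac * (kac⁻¹ * kab) * kbc⁻¹ * kad⁻¹ * kdc := by rw [c5]
    _ = kab * kbc⁻¹ * kad⁻¹ * kdc := by group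

section Interleave
variable {n : ℕ} {π : BraidGroup n →* Equiv.Perm (Fin n)} (hgen : IsBraidProj n π)
include hgen

lemma zq_interleave {a b c d : ℕ} (hab : a < b) (hbc : b < c) (hcd : c < d) (hdn : d < n) :
    (QuotientGroup.mk (QuotientGroup.mk (halfTwist n a c * halfTwist n b d *
        (halfTwist n a c)⁻¹ * (halfTwist n b d)⁻¹) : Gq n π) : Zq n π) =
      QuotientGroup.mk (ft n π a b) * QuotientGroup.mk (ft n π b c) *
        QuotientGroup.mk (ft n π a d) * QuotientGroup.mk (ft n π d c) := by
  have hacn : c < n := by omega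
  -- exact identity in the braid group
  have econj : halfTwist n a c * halfTwist n b d * (halfTwist n a c)⁻¹ =
      (halfTwist n a c ^ 2 * halfTwist n a b * (halfTwist n a c ^ 2)⁻¹) * halfTwist n a d *
        ((halfTwist n a c ^ 2 * halfTwist n a b * (halfTwist n a c ^ 2)⁻¹))⁻¹ := by
    rw [← braidR1 hbc hcd hdn]
    calc halfTwist n a c * (halfTwist n b c * halfTwist n c d * (halfTwist n b c)⁻¹) *
          (halfTwist n a c)⁻¹
        = (halfTwist n a c * halfTwist n b c * (halfTwist n a c)⁻¹) *
          (halfTwist n a c * halfTwist n c d * (halfTwist n a c)⁻¹) *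
          (halfTwist n a c * halfTwist n b c * (halfTwist n a c)⁻¹)⁻¹ := by group
      _ = (halfTwist n a c ^ 2 * halfTwist n a b * (halfTwist n a c ^ 2)⁻¹) *
            halfTwist n a d *
          ((halfTwist n a c ^ 2 * halfTwist n a b * (halfTwist n a c ^ 2)⁻¹))⁻¹ := by
          rw [braidR3' hab hbc hacn, braidR1 (lt_trans hab hbc) hcd hdn]
  -- the Gq computation
  have gq : (QuotientGroup.mk (halfTwist n a c * halfTwist n b d *
      (halfTwist n a c)⁻¹ * (halfTwist n b d)⁻¹) : Gq n π) =
      ft n π a b * (ft n π b c)⁻¹ * (ft n π a d)⁻¹ * ft n π d c := by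
    rw [show halfTwist n a c * halfTwist n b d * (halfTwist n a c)⁻¹ * (halfTwist n b d)⁻¹ =
      (halfTwist n a c * halfTwist n b d * (halfTwist n a c)⁻¹) * (halfTwist n b d)⁻¹ from by
        group]
    rw [econj]
    simp only [QuotientGroup.mk_mul, QuotientGroup.mk_inv, ← ft_eq (lt_trans hab hbc)]
    have e4 : (QuotientGroup.mk (halfTwist n a b) : Gq n π) *
        QuotientGroup.mk (halfTwist n a d) * (QuotientGroup.mk (halfTwist n a b))⁻¹ =
        ft n π a b * QuotientGroup.mk (halfTwist n b d) * (ft n π a b)⁻¹ := by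
      rw [← QuotientGroup.mk_inv, ← QuotientGroup.mk_mul, ← QuotientGroup.mk_mul,
        braidR1' hab (lt_trans hbc hcd) hdn]
      simp only [QuotientGroup.mk_mul, QuotientGroup.mk_inv, ← ft_eq hab]
    exact abstract_interleave
      (ft_push_inv hgen (by omega) (by omega) (by omega) (lt_trans hab (lt_trans hbc hcd)) hdn
        (by rw [if_pos rfl]) (by rw [if_neg (by omega), if_neg (by omega)]))
      (ft_pushW hgen (by omega) (by omega) (by omega) hab (by omega)
        (by rw [if_pos rfl]) (by rw [if_neg (by omega), if_neg (by omega)]))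
      (ft_pushW_inv hgen (by omega) (by omega) (by omega) hab (by omega)
        (by rw [if_neg (by omega), if_neg (by omega)])
        (by rw [if_neg (by omega), if_neg (by omega)]))
      e4
      (ft_pushW_inv hgen (by omega) (by omega) (by omega) (lt_trans hbc hcd) hdn
        (by rw [if_neg (by omega), if_neg (by omega)]) (by rw [if_pos rfl]))
      (ft_pushW_inv hgen (by omega) (by omega) (by omega) (lt_trans hbc hcd) hdn
        (by rw [if_neg (by omega), if_pos rfl]) (by rw [if_neg (by omega), if_neg (by omega)]))
      (ft_pushW hgen (by omega) (by omega) (by omega) (lt_trans hbc hcd) hdn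
        (by rw [if_pos rfl]) (by rw [if_neg (by omega), if_neg (by omega)]))
      (ft_pushW_inv hgen (by omega) (by omega) (by omega) (lt_trans hbc hcd) hdn
        (by rw [if_neg (by omega), if_neg (by omega)])
        (by rw [if_neg (by omega), if_neg (by omega)]))
      (comm_inv_inv (ft_comm' hgen (by omega) (by omega) (by omega) (by omega) (by omega)
        (by omega)))
      ((slide_inv (ft_comm' hgen (by omega) (by omega) (by omega) (by omega) (by omega)
        (by omega))).symm)
      (comm_inv_inv (ft_comm' hgen (by omega) (by omega) (by omega) (by omega) (by omega)
        (by omega)))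
      (comm_inv_inv (ft_comm' hgen (by omega) (by omega) (by omega) (by omega) (by omega)
        (by omega)))
      ((slide_inv (ft_comm' hgen (by omega) (by omega) (by omega) (by omega) (by omega)
        (by omega))).symm)
  rw [gq]
  simp only [QuotientGroup.mk_mul, QuotientGroup.mk_inv]
  rw [zq_inv_drop hbc hacn, zq_inv_drop (lt_trans hab (lt_trans hbc hcd)) hdn]
end Interleave

section ZqMore
variable {n : ℕ} {π : BraidGroup n →* Equiv.Perm (Fin n)} (hgen : IsBraidProj n π)

lemma zq_mk_symm (p q : ℕ) :
    (QuotientGroup.mk (ft n π p q) : Zq n π) = QuotientGroup.mk (ft n π q p) := by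
  rw [ft_symm]

lemma zq_inv_drop' {p q : ℕ} (h : p ≠ q) (hp : p < n) (hq : q < n) :
    (QuotientGroup.mk (ft n π p q) : Zq n π)⁻¹ = QuotientGroup.mk (ft n π p q) := by
  rcases lt_or_gt_of_ne h with h1 | h1
  · exact zq_inv_drop h1 hq
  · rw [zq_mk_symm]; exact zq_inv_drop h1 hp

include hgen

lemma zq_ft_comm {p q r s : ℕ} (hpq : p ≠ q) (hp : p < n) (hq : q < n)
    (hrs : r ≠ s) (hr : r < n) (hs : s < n) :
    (QuotientGroup.mk (ft n π p q) : Zq n π) * QuotientGroup.mk (ft n π r s) =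
      QuotientGroup.mk (ft n π r s) * QuotientGroup.mk (ft n π p q) := by
  have h := ft_comm' hgen hpq hp hq hrs hr hs
  calc (QuotientGroup.mk (ft n π p q) : Zq n π) * QuotientGroup.mk (ft n π r s)
      = QuotientGroup.mk (ft n π p q * ft n π r s) := by rw [QuotientGroup.mk_mul]
    _ = QuotientGroup.mk (ft n π r s * ft n π p q) := by rw [h]
    _ = QuotientGroup.mk (ft n π r s) * QuotientGroup.mk (ft n π p q) := by
        rw [QuotientGroup.mk_mul]

lemma zq_interleave' {a b c d : ℕ} (hab : a < b) (hbc : b < c) (hcd : c < d) (hdn : d < n) :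
    (QuotientGroup.mk (QuotientGroup.mk (halfTwist n b d * halfTwist n a c *
        (halfTwist n b d)⁻¹ * (halfTwist n a c)⁻¹) : Gq n π) : Zq n π) =
      QuotientGroup.mk (ft n π a b) * QuotientGroup.mk (ft n π a d) *
        QuotientGroup.mk (ft n π b c) * QuotientGroup.mk (ft n π c d) := by
  have hword : halfTwist n b d * halfTwist n a c *
      (halfTwist n b d)⁻¹ * (halfTwist n a c)⁻¹ =
      (halfTwist n a c * halfTwist n b d * (halfTwist n a c)⁻¹ * (halfTwist n b d)⁻¹)⁻¹ := by
    group
  rw [hword]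
  simp only [QuotientGroup.mk_inv]
  rw [zq_interleave hgen hab hbc hcd hdn]
  have hdrop : ∀ (p q : ℕ), p ≠ q → p < n → q < n →
      (QuotientGroup.mk (ft n π p q) : Zq n π)⁻¹ = QuotientGroup.mk (ft n π p q) :=
    fun p q h hp hq => zq_inv_drop' h hp hq
  have C : ∀ (p q r s : ℕ), p ≠ q → p < n → q < n → r ≠ s → r < n → s < n →
      (QuotientGroup.mk (ft n π p q) : Zq n π) * QuotientGroup.mk (ft n π r s) =
        QuotientGroup.mk (ft n π r s) * QuotientGroup.mk (ft n π p q) :=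
    fun p q r s h1 h2 h3 h4 h5 h6 => zq_ft_comm hgen h1 h2 h3 h4 h5 h6
  set f1 := (QuotientGroup.mk (ft n π a b) : Zq n π) with hf1
  set f2 := (QuotientGroup.mk (ft n π b c) : Zq n π) with hf2
  set f3 := (QuotientGroup.mk (ft n π a d) : Zq n π) with hf3
  set f4 := (QuotientGroup.mk (ft n π d c) : Zq n π) with hf4
  have c12 : f1 * f2 = f2 * f1 := C a b b c (by omega) (by omega) (by omega) (by omega)
    (by omega) (by omega)
  have c13 : f1 * f3 = f3 * f1 := C a b a d (by omega) (by omega) (by omega) (by omega)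
    (by omega) (by omega)
  have c23 : f2 * f3 = f3 * f2 := C b c a d (by omega) (by omega) (by omega) (by omega)
    (by omega) (by omega)
  have c24 : f2 * f4 = f4 * f2 := C b c d c (by omega) (by omega) (by omega) (by omega)
    (by omega) (by omega)
  have c14 : f1 * f4 = f4 * f1 := C a b d c (by omega) (by omega) (by omega) (by omega)
    (by omega) (by omega)
  have c34 : f3 * f4 = f4 * f3 := C a d d c (by omega) (by omega) (by omega) (by omega)
    (by omega) (by omega)
  have d1 : f1⁻¹ = f1 := hdrop a b (by omega) (by omega) (by omega)
  have d2 : f2⁻¹ = f2 := hdrop b c (by omega) (by omega) (by omega)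
  have d3 : f3⁻¹ = f3 := hdrop a d (by omega) (by omega) (by omega)
  have d4 : f4⁻¹ = f4 := hdrop d c (by omega) (by omega) (by omega)
  have hsym : f4 = QuotientGroup.mk (ft n π c d) := by rw [hf4, zq_mk_symm]
  rw [← hsym]
  calc (f1 * f2 * f3 * f4)⁻¹ = f4⁻¹ * (f3⁻¹ * (f2⁻¹ * f1⁻¹)) := by group
    _ = f4 * (f3 * (f2 * f1)) := by rw [d1, d2, d3, d4]
    _ = f4 * (f3 * (f1 * f2)) := by rw [← c12]
    _ = f4 * ((f3 * f1) * f2) := by group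
    _ = f4 * ((f1 * f3) * f2) := by rw [c13]
    _ = (f4 * f1) * f3 * f2 := by group
    _ = (f1 * f4) * f3 * f2 := by rw [← c14]
    _ = f1 * (f4 * f3) * f2 := by group
    _ = f1 * (f3 * f4) * f2 := by rw [← c34]
    _ = f1 * f3 * f4 * f2 := by group
    _ = f1 * f3 * (f4 * f2) := by group
    _ = f1 * f3 * (f2 * f4) := by rw [← c24]
    _ = f1 * f3 * f2 * f4 := by group


end ZqMore

/-- The cocycle `κ` classifying `𝒵_n` as an extension of `S_n` by
`ℤ₂^(n choose 2)` equals `η ∘ φ`, where `φ` is the cocycle classifying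
`G_n = B_n/[PB_n,PB_n]` and `η` is the mod 2 reduction (realized as the natural projection
`f : G_n → 𝒵_n = G_n/A_n` restricted to the kernels).  Explicitly, with the section
`s' = f ∘ s`: `κ(c̃_{i,j}) = ḡ_{i,j}`;
`κ(d̃_{i,j,k,ℓ}) = ḡ_{i,k} + ḡ_{k,j} + ḡ_{i,ℓ} + ḡ_{ℓ,j}` if `i<k<j<ℓ` or `k<i<ℓ<j`, else
`0`; `κ(ẽ_{i,k,j}) = ḡ_{i,j} + ḡ_{j,k}` if `i<k<j`, `j<i<k`, or `k<j<i`, else `0`. -/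
theorem statement17 (n : ℕ) (π : BraidGroup n →* Equiv.Perm (Fin n))
    (hgen : IsBraidProj n π) (hsurj : Function.Surjective π)
    (p : Gq n π →* Equiv.Perm (Fin n))
    (hp : ∀ x : BraidGroup n, p (QuotientGroup.mk x) = π x)
    (s : Equiv.Perm (Fin n) → Gq n π)
    (hsec : ∀ g, p (s g) = g) (hone : s 1 = 1)
    (hs : ∀ i j : Fin n, i < j → s (Equiv.swap i j) = ht n π i j)
    (hd : ∀ i j k l : Fin n, i < j → k < l →
      ({i, j} : Finset (Fin n)) ∩ {k, l} = ∅ →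
      s (Equiv.swap i j * Equiv.swap k l) =
        if j < l then ht n π i j * ht n π k l else ht n π k l * ht n π i j)
    (he : ∀ i k j : Fin n, i ≠ k → i ≠ j → k ≠ j →
      s (Equiv.swap i j * Equiv.swap j k) =
        if k < j ∧ i < j then ht n π i k * ht n π i j
        else if i < k ∧ j < k then ht n π i j * ht n π j k
        else ht n π k j * ht n π k i) :
    -- κ = η ∘ φ: the cocycle of the section `s' = f ∘ s` of `𝒵_n` is the image under the
    -- natural projection `f : G_n → 𝒵_n` of the cocycle `φ` of the section `s` of `G_n`
    (∀ g h : Equiv.Perm (Fin n),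
      ((QuotientGroup.mk (s g) : Zq n π) * QuotientGroup.mk (s h) *
          (QuotientGroup.mk (s (g * h)))⁻¹) =
        QuotientGroup.mk (s g * s h * (s (g * h))⁻¹)) ∧
    -- κ(c̃_{i,j}) = ḡ_{i,j}
    (∀ i j : Fin n, i < j →
      (QuotientGroup.mk (s (Equiv.swap i j) * s (Equiv.swap i j)) : Zq n π) =
        fgZ n π i j) ∧
    -- κ(d̃_{i,j,k,ℓ})
    (∀ i j k l : Fin n, i < j → k < l →
      ({i, j} : Finset (Fin n)) ∩ {k, l} = ∅ →
      (QuotientGroup.mk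
          ((s (Equiv.swap i j) * s (Equiv.swap k l) *
              (s (Equiv.swap i j * Equiv.swap k l))⁻¹) *
            (s (Equiv.swap k l) * s (Equiv.swap i j) *
              (s (Equiv.swap k l * Equiv.swap i j))⁻¹)⁻¹) : Zq n π) =
        if (i < k ∧ k < j ∧ j < l) ∨ (k < i ∧ i < l ∧ l < j) then
          fgZ n π i k * fgZ n π k j * fgZ n π i l * fgZ n π l j
        else 1) ∧
    -- κ(ẽ_{i,k,j})
    (∀ i k j : Fin n, i ≠ k → i ≠ j → k ≠ j →
      (QuotientGroup.mk
          ((s (Equiv.swap i j) * s (Equiv.swap j k) *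
              (s (Equiv.swap i j * Equiv.swap j k))⁻¹) *
            (s (Equiv.swap i k) * s (Equiv.swap i j) *
              (s (Equiv.swap i k * Equiv.swap i j))⁻¹)⁻¹) : Zq n π) =
        if (i < k ∧ k < j) ∨ (j < i ∧ i < k) ∨ (k < j ∧ j < i) then
          fgZ n π i j * fgZ n π j k
        else 1) := by
  have hij' : ∀ p q : Fin n, p < q → (p:ℕ) < (q:ℕ) := fun p q h => h
  have sgen : ∀ p q : Fin n, p ≠ q → s (Equiv.swap p q) = ht n π p q := by
    intro p q hpq
    rcases lt_or_gt_of_ne hpq with h | h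
    · exact hs p q h
    · rw [Equiv.swap_comm, hs q p h, ht, ht, bb_symm]
  refine ⟨?_, ?_, ?_, ?_⟩
  · intro g h
    rfl
  · -- κ(c̃)
    intro i j hij
    rw [hs i j hij]
    rw [show ht n π ↑i ↑j * ht n π ↑i ↑j = ft n π ↑i ↑j from by
      rw [ht, ft, sq, QuotientGroup.mk_mul]]
    rfl
  · -- κ(d̃)
    intro i j k l hij hkl hdisj
    have hmem := Finset.eq_empty_iff_forall_notMem.mp hdisj
    have hik : i ≠ k := fun h => hmem i (by rw [Finset.mem_inter]; refine ⟨by simp, by simp [h]⟩)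
    have hil : i ≠ l := fun h => hmem i (by rw [Finset.mem_inter]; refine ⟨by simp, by simp [h]⟩)
    have hjk : j ≠ k := fun h => hmem j (by rw [Finset.mem_inter]; refine ⟨by simp, by simp [h]⟩)
    have hjl : j ≠ l := fun h => hmem j (by rw [Finset.mem_inter]; refine ⟨by simp, by simp [h]⟩)
    have vik : (i:ℕ) ≠ (k:ℕ) := fun h => hik (Fin.ext h)
    have vil : (i:ℕ) ≠ (l:ℕ) := fun h => hil (Fin.ext h)
    have vjk : (j:ℕ) ≠ (k:ℕ) := fun h => hjk (Fin.ext h)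
    have vjl : (j:ℕ) ≠ (l:ℕ) := fun h => hjl (Fin.ext h)
    have vij : (i:ℕ) < (j:ℕ) := hij
    have vkl : (k:ℕ) < (l:ℕ) := hkl
    have hdisj2 : ({k, l} : Finset (Fin n)) ∩ {i, j} = ∅ := by
      rw [Finset.inter_comm]; exact hdisj
    have hgh := hd i j k l hij hkl hdisj
    have hhg := hd k l i j hkl hij hdisj2
    have hcombined : (s (Equiv.swap i j) * s (Equiv.swap k l) *
        (s (Equiv.swap i j * Equiv.swap k l))⁻¹) *
        (s (Equiv.swap k l) * s (Equiv.swap i j) *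
        (s (Equiv.swap k l * Equiv.swap i j))⁻¹)⁻¹ =
        QuotientGroup.mk (bb n ↑i ↑j * bb n ↑k ↑l * (bb n ↑i ↑j)⁻¹ * (bb n ↑k ↑l)⁻¹) := by
      rw [hgh, hhg, hs i j hij, hs k l hkl]
      have fold : ht n π ↑i ↑j * ht n π ↑k ↑l * (ht n π ↑i ↑j)⁻¹ * (ht n π ↑k ↑l)⁻¹ =
          QuotientGroup.mk (bb n ↑i ↑j * bb n ↑k ↑l * (bb n ↑i ↑j)⁻¹ * (bb n ↑k ↑l)⁻¹) := by
        simp only [ht, QuotientGroup.mk_mul, QuotientGroup.mk_inv]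
      rcases lt_or_gt_of_ne hjl with h | h
      · rw [if_pos h, if_neg (lt_asymm h), ← fold]; group
      · rw [if_neg (lt_asymm h), if_pos h, ← fold]; group
    rw [hcombined]
    by_cases hint : ((i:ℕ) < (k:ℕ) ∧ (k:ℕ) < (j:ℕ) ∧ (j:ℕ) < (l:ℕ)) ∨
        ((k:ℕ) < (i:ℕ) ∧ (i:ℕ) < (l:ℕ) ∧ (l:ℕ) < (j:ℕ))
    · rw [if_pos (by exact hint)]
      rcases hint with ⟨h1, h2, h3⟩ | ⟨h1, h2, h3⟩
      · rw [bb_eq vij, bb_eq vkl, zq_interleave hgen h1 h2 h3 l.2]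
        rfl
      · rw [bb_eq vij, bb_eq vkl, zq_interleave' hgen h1 h2 h3 j.2]
        simp only [fgZ]
        rw [zq_mk_symm (↑k) (↑i)]
    · rw [if_neg (by exact hint)]
      have hcomm2 : bb n ↑i ↑j * bb n ↑k ↑l = bb n ↑k ↑l * bb n ↑i ↑j := by
        rw [bb_eq vij, bb_eq vkl]
        rcases (show (j:ℕ) < (k:ℕ) ∨ (l:ℕ) < (i:ℕ) ∨ ((i:ℕ) < (k:ℕ) ∧ (l:ℕ) < (j:ℕ)) ∨
            ((k:ℕ) < (i:ℕ) ∧ (j:ℕ) < (l:ℕ)) from by omega) with h | h | h | h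
        · exact braidC1 vij h vkl
        · exact (braidC1 vkl h vij).symm
        · exact braidC2 h.1 vkl h.2 j.2
        · exact (braidC2 h.1 vij h.2 l.2).symm
      rw [show bb n ↑i ↑j * bb n ↑k ↑l * (bb n ↑i ↑j)⁻¹ * (bb n ↑k ↑l)⁻¹ = 1 from by
        rw [hcomm2]; group]
      simp
  · -- κ(ẽ)
    intro i k j hik hij hkj
    have vik : (i:ℕ) ≠ (k:ℕ) := fun h => hik (Fin.ext h)
    have vij : (i:ℕ) ≠ (j:ℕ) := fun h => hij (Fin.ext h)
    have vkj : (k:ℕ) ≠ (j:ℕ) := fun h => hkj (Fin.ext h)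
    have hswap : Equiv.swap i j * Equiv.swap j k = Equiv.swap i k * Equiv.swap i j := by
      have h := Equiv.swap_mul_swap_mul_swap (x := k) (y := j) (z := i) hkj hik.symm
      rw [Equiv.swap_comm j i, Equiv.swap_comm k j] at h
      calc Equiv.swap i j * Equiv.swap j k
          = Equiv.swap i j * Equiv.swap j k * Equiv.swap i j * Equiv.swap i j := by
            rw [mul_assoc (Equiv.swap i j * Equiv.swap j k), Equiv.swap_mul_self, mul_one]
        _ = Equiv.swap i k * Equiv.swap i j := by rw [h]
    have hword : (s (Equiv.swap i j) * s (Equiv.swap j k) *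
        (s (Equiv.swap i j * Equiv.swap j k))⁻¹) *
        (s (Equiv.swap i k) * s (Equiv.swap i j) *
        (s (Equiv.swap i k * Equiv.swap i j))⁻¹)⁻¹ =
        QuotientGroup.mk (bb n ↑i ↑j * bb n ↑j ↑k * (bb n ↑i ↑j)⁻¹ * (bb n ↑i ↑k)⁻¹) := by
      rw [hswap, sgen i j hij, sgen j k (Ne.symm hkj), sgen i k hik]
      have fold : ht n π ↑i ↑j * ht n π ↑j ↑k * (ht n π ↑i ↑j)⁻¹ * (ht n π ↑i ↑k)⁻¹ =
          QuotientGroup.mk (bb n ↑i ↑j * bb n ↑j ↑k * (bb n ↑i ↑j)⁻¹ * (bb n ↑i ↑k)⁻¹) := by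
        simp only [ht, QuotientGroup.mk_mul, QuotientGroup.mk_inv]
      rw [← fold]
      group
    rw [hword]
    rcases (show ((i:ℕ) < (j:ℕ) ∧ (j:ℕ) < (k:ℕ)) ∨ ((i:ℕ) < (k:ℕ) ∧ (k:ℕ) < (j:ℕ)) ∨
        ((j:ℕ) < (i:ℕ) ∧ (i:ℕ) < (k:ℕ)) ∨ ((j:ℕ) < (k:ℕ) ∧ (k:ℕ) < (i:ℕ)) ∨
        ((k:ℕ) < (i:ℕ) ∧ (i:ℕ) < (j:ℕ)) ∨ ((k:ℕ) < (j:ℕ) ∧ (j:ℕ) < (i:ℕ)) from by omega)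
      with ⟨h1, h2⟩ | ⟨h1, h2⟩ | ⟨h1, h2⟩ | ⟨h1, h2⟩ | ⟨h1, h2⟩ | ⟨h1, h2⟩
    · -- i < j < k : trivial
      rw [if_neg (by rintro (⟨a1, a2⟩ | ⟨a1, a2⟩ | ⟨a1, a2⟩) <;>
        (have b1 := hij' _ _ a1; have b2 := hij' _ _ a2; omega))]
      rw [bb_eq h1, bb_eq h2, bb_eq (show (i:ℕ) < (k:ℕ) by omega)]
      rw [show halfTwist n ↑i ↑j * halfTwist n ↑j ↑k * (halfTwist n ↑i ↑j)⁻¹ *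
          (halfTwist n ↑i ↑k)⁻¹ = 1 from by rw [braidR1 h1 h2 k.2]; group]
      simp
    · -- i < k < j
      rw [if_pos (Or.inl ⟨h1, h2⟩)]
      rw [bb_eq (show (i:ℕ) < (j:ℕ) by omega),
        show bb n ↑j ↑k = halfTwist n ↑k ↑j from by rw [bb_symm, bb_eq h2],
        bb_eq h1, zq_tri1 hgen h1 h2 j.2]
      simp only [fgZ]
      rw [zq_mk_symm (↑k) (↑j)]
    · -- j < i < k
      rw [if_pos (Or.inr (Or.inl ⟨h1, h2⟩))]
      rw [show bb n ↑i ↑j = halfTwist n ↑j ↑i from by rw [bb_symm, bb_eq h1],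
        bb_eq (show (j:ℕ) < (k:ℕ) by omega), bb_eq h2, zq_tri2 hgen h1 h2 k.2]
      simp only [fgZ]
      rw [zq_mk_symm (↑j) (↑i)]
    · -- j < k < i : trivial
      rw [if_neg (by rintro (⟨a1, a2⟩ | ⟨a1, a2⟩ | ⟨a1, a2⟩) <;>
        (have b1 := hij' _ _ a1; have b2 := hij' _ _ a2; omega))]
      rw [show bb n ↑i ↑j = halfTwist n ↑j ↑i from by rw [bb_symm, bb_eq (by omega)],
        bb_eq h1, show bb n ↑i ↑k = halfTwist n ↑k ↑i from by rw [bb_symm, bb_eq h2]]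
      rw [show halfTwist n ↑j ↑i * halfTwist n ↑j ↑k * (halfTwist n ↑j ↑i)⁻¹ *
          (halfTwist n ↑k ↑i)⁻¹ = 1 from by rw [braidR3 h1 h2 i.2]; group]
      simp
    · -- k < i < j : trivial
      rw [if_neg (by rintro (⟨a1, a2⟩ | ⟨a1, a2⟩ | ⟨a1, a2⟩) <;>
        (have b1 := hij' _ _ a1; have b2 := hij' _ _ a2; omega))]
      rw [bb_eq (show (i:ℕ) < (j:ℕ) by omega),
        show bb n ↑j ↑k = halfTwist n ↑k ↑j from by rw [bb_symm, bb_eq (by omega)],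
        show bb n ↑i ↑k = halfTwist n ↑k ↑i from by rw [bb_symm, bb_eq h1]]
      rw [show halfTwist n ↑i ↑j * halfTwist n ↑k ↑j * (halfTwist n ↑i ↑j)⁻¹ *
          (halfTwist n ↑k ↑i)⁻¹ = 1 from by rw [braidR2 h1 h2 j.2]; group]
      simp
    · -- k < j < i
      rw [if_pos (Or.inr (Or.inr ⟨h1, h2⟩))]
      rw [show bb n ↑i ↑j = halfTwist n ↑j ↑i from by rw [bb_symm, bb_eq h2],
        show bb n ↑j ↑k = halfTwist n ↑k ↑j from by rw [bb_symm, bb_eq h1],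
        show bb n ↑i ↑k = halfTwist n ↑k ↑i from by rw [bb_symm, bb_eq (by omega)],
        zq_tri3 hgen h1 h2 i.2]
      simp only [fgZ]
      rw [zq_mk_symm (↑j) (↑i), zq_mk_symm (↑k) (↑j)]
end

section
/- For all n ≥ 1, the level 4 congruence subgroup B_n[4] (equal to PB_n²) is normally generated as a subgroup of B_n by the elements [b_i², b_{i+1}²] for 1 ≤ i ≤ n−1, [b_{i,i+2}², b_{i+1,i+3}²] for 1 ≤ i ≤ n−4, and b_i⁴ for 1 ≤ i ≤ n−1. Equivalently, the quotient of B_n (with Artin presentation) by the normal closure of these elements is isomorphic to 𝒵_n = B_n/PB_n². -/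
open scoped commutatorElement

/-! ### Abstract word lemmas -/

section Abstract
variable {G : Type*} [Group G]

theorem braid_mid {a b : G} (h : a * b * a = b * a * b) (w : G) :
    a * (b * (a * w)) = b * (a * (b * w)) := by
  rw [← mul_assoc, ← mul_assoc, h, mul_assoc, mul_assoc]

theorem braid_end {a b : G} (h : a * b * a = b * a * b) :
    a * (b * a) = b * (a * b) := by
  rw [← mul_assoc, h, mul_assoc]

theorem comm_mid {a b : G} (h : a * b = b * a) (w : G) :
    a * (b * w) = b * (a * w) := by
  rw [← mul_assoc, h, mul_assoc]

variable {x y z : G} (hxy : x * y * x = y * x * y) (hyz : y * z * y = z * y * z)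
  (hxz : x * z = z * x)

include hxy hyz hxz in
theorem delta_y : (x * y * z * x * y * x) * y = y * (x * y * z * x * y * x) := by
  have := calc x * (y * (z * (x * (y * (x * (y))))))
      _ = x * (y * (z * (x * (x * (y * (x)))))) := congrArg (x * ·) (congrArg (y * ·) (congrArg (z * ·) (congrArg (x * ·) (braid_end hxy.symm))))
      _ = x * (y * (x * (z * (x * (y * (x)))))) := congrArg (x * ·) (congrArg (y * ·) (comm_mid hxz.symm (x * (y * (x)))))
      _ = y * (x * (y * (z * (x * (y * (x)))))) := braid_mid hxy (z * (x * (y * (x))))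
  group at this ⊢
  convert this using 1 <;> group

include hxy hyz hxz in
theorem delta_z : (x * y * z * x * y * x) * z = x * (x * y * z * x * y * x) := by
  have := calc x * (y * (z * (x * (y * (x * (z))))))
      _ = x * (y * (x * (z * (y * (x * (z)))))) := congrArg (x * ·) (congrArg (y * ·) (comm_mid hxz.symm (y * (x * (z)))))
      _ = x * (y * (x * (z * (y * (z * (x)))))) := congrArg (x * ·) (congrArg (y * ·) (congrArg (x * ·) (congrArg (z * ·) (congrArg (y * ·) (hxz)))))
      _ = x * (y * (x * (y * (z * (y * (x)))))) := congrArg (x * ·) (congrArg (y * ·) (congrArg (x * ·) (braid_mid hyz.symm (x))))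
      _ = x * (x * (y * (x * (z * (y * (x)))))) := congrArg (x * ·) (braid_mid hxy.symm (z * (y * (x))))
      _ = x * (x * (y * (z * (x * (y * (x)))))) := congrArg (x * ·) (congrArg (x * ·) (congrArg (y * ·) (comm_mid hxz (y * (x)))))
  group at this ⊢
  convert this using 1 <;> group

include hxy hyz hxz in
theorem delta_x : (x * y * z * x * y * x) * x = z * (x * y * z * x * y * x) := by
  have := calc x * (y * (z * (x * (y * (x * (x))))))
      _ = x * (y * (z * (y * (x * (y * (x)))))) := congrArg (x * ·) (congrArg (y * ·) (congrArg (z * ·) (braid_mid hxy (x))))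
      _ = x * (z * (y * (z * (x * (y * (x)))))) := congrArg (x * ·) (braid_mid hyz (x * (y * (x))))
      _ = z * (x * (y * (z * (x * (y * (x)))))) := comm_mid hxz (y * (z * (x * (y * (x)))))
  group at this ⊢
  convert this using 1 <;> group

end Abstract

section Abstract2
set_option linter.unusedSectionVars false
variable {G : Type*} [Group G]
variable {x y z : G} (hxy : x * y * x = y * x * y) (hyz : y * z * y = z * y * z)
  (hxz : x * z = z * x)

include hxy hyz hxz in
theorem posI4 : (x * y * z * x * y * x) * (x * y * z * x * y * x) =
    x * (x * (y * (x * (x * (y * (z * (y * (x * (x * (y * (z))))))))))) := by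
  have := calc x * (y * (z * (x * (y * (x * (x * (y * (z * (x * (y * (x)))))))))))
      _ = x * (y * (z * (x * (y * (x * (x * (y * (z * (y * (x * (y))))))))))) := congrArg (x * ·) (congrArg (y * ·) (congrArg (z * ·) (congrArg (x * ·) (congrArg (y * ·) (congrArg (x * ·) (congrArg (x * ·) (congrArg (y * ·) (congrArg (z * ·) (braid_end hxy)))))))))
      _ = x * (y * (z * (x * (y * (x * (x * (z * (y * (z * (x * (y))))))))))) := congrArg (x * ·) (congrArg (y * ·) (congrArg (z * ·) (congrArg (x * ·) (congrArg (y * ·) (congrArg (x * ·) (congrArg (x * ·) (braid_mid hyz (x * (y)))))))))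
      _ = x * (y * (x * (z * (y * (x * (x * (z * (y * (z * (x * (y))))))))))) := congrArg (x * ·) (congrArg (y * ·) (comm_mid hxz.symm (y * (x * (x * (z * (y * (z * (x * (y))))))))))
      _ = x * (y * (x * (z * (y * (x * (z * (x * (y * (z * (x * (y))))))))))) := congrArg (x * ·) (congrArg (y * ·) (congrArg (x * ·) (congrArg (z * ·) (congrArg (y * ·) (congrArg (x * ·) (comm_mid hxz (y * (z * (x * (y))))))))))
      _ = x * (y * (x * (z * (y * (z * (x * (x * (y * (z * (x * (y))))))))))) := congrArg (x * ·) (congrArg (y * ·) (congrArg (x * ·) (congrArg (z * ·) (congrArg (y * ·) (comm_mid hxz (x * (y * (z * (x * (y))))))))))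
      _ = x * (y * (x * (y * (z * (y * (x * (x * (y * (z * (x * (y))))))))))) := congrArg (x * ·) (congrArg (y * ·) (congrArg (x * ·) (braid_mid hyz.symm (x * (x * (y * (z * (x * (y)))))))))
      _ = x * (x * (y * (x * (z * (y * (x * (x * (y * (z * (x * (y))))))))))) := congrArg (x * ·) (braid_mid hxy.symm (z * (y * (x * (x * (y * (z * (x * (y)))))))))
      _ = x * (x * (y * (x * (z * (y * (x * (x * (y * (x * (z * (y))))))))))) := congrArg (x * ·) (congrArg (x * ·) (congrArg (y * ·) (congrArg (x * ·) (congrArg (z * ·) (congrArg (y * ·) (congrArg (x * ·) (congrArg (x * ·) (congrArg (y * ·) (comm_mid hxz.symm (y))))))))))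
      _ = x * (x * (y * (x * (z * (y * (x * (y * (x * (y * (z * (y))))))))))) := congrArg (x * ·) (congrArg (x * ·) (congrArg (y * ·) (congrArg (x * ·) (congrArg (z * ·) (congrArg (y * ·) (congrArg (x * ·) (braid_mid hxy (z * (y)))))))))
      _ = x * (x * (y * (x * (z * (x * (y * (x * (x * (y * (z * (y))))))))))) := congrArg (x * ·) (congrArg (x * ·) (congrArg (y * ·) (congrArg (x * ·) (congrArg (z * ·) (braid_mid hxy.symm (x * (y * (z * (y)))))))))
      _ = x * (x * (y * (x * (z * (x * (y * (x * (x * (z * (y * (z))))))))))) := congrArg (x * ·) (congrArg (x * ·) (congrArg (y * ·) (congrArg (x * ·) (congrArg (z * ·) (congrArg (x * ·) (congrArg (y * ·) (congrArg (x * ·) (congrArg (x * ·) (braid_end hyz)))))))))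
      _ = x * (x * (y * (x * (x * (z * (y * (x * (x * (z * (y * (z))))))))))) := congrArg (x * ·) (congrArg (x * ·) (congrArg (y * ·) (congrArg (x * ·) (comm_mid hxz.symm (y * (x * (x * (z * (y * (z))))))))))
      _ = x * (x * (y * (x * (x * (z * (y * (x * (z * (x * (y * (z))))))))))) := congrArg (x * ·) (congrArg (x * ·) (congrArg (y * ·) (congrArg (x * ·) (congrArg (x * ·) (congrArg (z * ·) (congrArg (y * ·) (congrArg (x * ·) (comm_mid hxz (y * (z))))))))))
      _ = x * (x * (y * (x * (x * (z * (y * (z * (x * (x * (y * (z))))))))))) := congrArg (x * ·) (congrArg (x * ·) (congrArg (y * ·) (congrArg (x * ·) (congrArg (x * ·) (congrArg (z * ·) (congrArg (y * ·) (comm_mid hxz (x * (y * (z))))))))))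
      _ = x * (x * (y * (x * (x * (y * (z * (y * (x * (x * (y * (z))))))))))) := congrArg (x * ·) (congrArg (x * ·) (congrArg (y * ·) (congrArg (x * ·) (congrArg (x * ·) (braid_mid hyz.symm (x * (x * (y * (z)))))))))
  calc (x * y * z * x * y * x) * (x * y * z * x * y * x)
      = x * (y * (z * (x * (y * (x * (x * (y * (z * (x * (y * (x))))))))))) := by group
    _ = x * (x * (y * (x * (x * (y * (z * (y * (x * (x * (y * (z))))))))))) := this

include hxy in
theorem conj_braid_1 : x * y * x⁻¹ = y⁻¹ * x * y := by
  have h : x * y = y⁻¹ * (x * y * x) := by rw [hxy]; group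
  rw [show x * y * x⁻¹ = (x * y) * x⁻¹ by group, h]; group

include hxy hyz hxz in
/-- `Δ² = X Y P Z Q R` : the square of the half twist equals the ordered
product of the six squared half twists. -/
theorem deltaSq_eq : (x * y * z * x * y * x) * (x * y * z * x * y * x) =
    x ^ 2 * y ^ 2 * (x * y * x⁻¹) ^ 2 * z ^ 2 * (y * z * y⁻¹) ^ 2 *
      (x * (y * z * y⁻¹) * x⁻¹) ^ 2 := by
  have hp : x * y * x⁻¹ = y⁻¹ * x * y := conj_braid_1 hxy
  have hq : y * z * y⁻¹ = z⁻¹ * y * z := conj_braid_1 hyz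
  have hr : x * (y * z * y⁻¹) * x⁻¹ = z⁻¹ * (y⁻¹ * x * y) * z := by
    have hc : Commute x z := hxz
    have h1 : x * z⁻¹ = z⁻¹ * x := hc.inv_right.eq
    have h2 : z * x⁻¹ = x⁻¹ * z := hc.symm.inv_right.eq
    rw [hq]
    calc x * (z⁻¹ * y * z) * x⁻¹ = (x * z⁻¹) * y * (z * x⁻¹) := by group
      _ = (z⁻¹ * x) * y * (x⁻¹ * z) := by rw [h1, h2]
      _ = z⁻¹ * (x * y * x⁻¹) * z := by group
      _ = z⁻¹ * (y⁻¹ * x * y) * z := by rw [hp]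
  rw [hr, hq, hp, posI4 hxy hyz hxz]
  simp only [sq]
  group

/-! ### Basic braid group lemmas -/

namespace St18
open PresentedGroup

variable {n : ℕ}

theorem mk_rel {r : FreeGroup (Fin (n - 1))} (h : r ∈ braidRels n) :
    PresentedGroup.mk (braidRels n) r = 1 :=
  (QuotientGroup.eq_one_iff r).2 (Subgroup.subset_normalClosure h)

theorem bgen_eq_of (t : ℕ) (h : t < n - 1) : bgen n t = PresentedGroup.of ⟨t, h⟩ := dif_pos h

theorem bgen_out {t : ℕ} (h : ¬ t < n - 1) : bgen n t = 1 := dif_neg h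

theorem bgen_braid {t : ℕ} (h : t + 2 < n) :
    bgen n t * bgen n (t + 1) * bgen n t = bgen n (t + 1) * bgen n t * bgen n (t + 1) := by
  have h1 : t < n - 1 := by omega
  have h2 : t + 1 < n - 1 := by omega
  have hm : (FreeGroup.of (⟨t, h1⟩ : Fin (n - 1)) * FreeGroup.of (⟨t + 1, h2⟩ : Fin (n - 1)) *
      FreeGroup.of (⟨t, h1⟩ : Fin (n - 1)) *
      (FreeGroup.of (⟨t + 1, h2⟩ : Fin (n - 1)) * FreeGroup.of (⟨t, h1⟩ : Fin (n - 1)) *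
        FreeGroup.of (⟨t + 1, h2⟩ : Fin (n - 1)))⁻¹) ∈ braidRels n :=
    ⟨⟨t, h1⟩, ⟨t + 1, h2⟩, Or.inl ⟨rfl, rfl⟩⟩
  have := mk_rel hm
  rw [map_mul, map_inv, mul_inv_eq_one] at this
  rw [bgen_eq_of t h1, bgen_eq_of (t + 1) h2]
  exact this

theorem bgen_comm {t s : ℕ} (h : t + 2 ≤ s) : Commute (bgen n t) (bgen n s) := by
  by_cases hs : s < n - 1
  · have h1 : t < n - 1 := by omega
    have hm : (FreeGroup.of (⟨t, h1⟩ : Fin (n - 1)) * FreeGroup.of (⟨s, hs⟩ : Fin (n - 1)) *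
        (FreeGroup.of (⟨s, hs⟩ : Fin (n - 1)) * FreeGroup.of (⟨t, h1⟩ : Fin (n - 1)))⁻¹) ∈
        braidRels n := ⟨⟨t, h1⟩, ⟨s, hs⟩, Or.inr ⟨by simpa using by omega, rfl⟩⟩
    have := mk_rel hm
    rw [map_mul, map_inv, mul_inv_eq_one] at this
    rw [bgen_eq_of t h1, bgen_eq_of s hs]
    exact this
  · rw [bgen_out hs]; exact Commute.one_right _

theorem bgen_sq_one_aux (π : BraidGroup n →* Equiv.Perm (Fin n)) (hgen : IsBraidProj n π)
    (t : ℕ) : π (bgen n t) ^ 2 = 1 := by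
  by_cases h : t < n - 1
  · rw [bgen_eq_of t h, hgen ⟨t, h⟩, sq, Equiv.swap_mul_self]
  · rw [bgen_out h]; simp

/-! ### `bpref` lemmas -/

theorem bpref_nil {i j : ℕ} (h : j ≤ i) : bpref n i j = 1 := by
  simp [bpref, Nat.sub_eq_zero_of_le h]

theorem bpref_concat {i j : ℕ} (h : i ≤ j) :
    bpref n i (j + 1) = bpref n i j * bgen n j := by
  unfold bpref
  rw [show j + 1 - i = (j - i) + 1 by omega, List.range'_concat,
    show i + 1 * (j - i) = j by omega]
  simp

theorem bpref_cons {i j : ℕ} (h : i < j) :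
    bpref n i j = bgen n i * bpref n (i + 1) j := by
  unfold bpref
  rw [show j - i = (j - (i + 1)) + 1 by omega, List.range'_succ]
  simp

theorem bpref_split {i k j : ℕ} (h1 : i ≤ k) (h2 : k ≤ j) :
    bpref n i j = bpref n i k * bpref n k j := by
  have key : List.range' i (k - i) ++ List.range' k (j - k) = List.range' i (j - i) := by
    have h3 := List.range'_append (s := i) (m := k - i) (n := j - k) (step := 1)
    rw [show i + 1 * (k - i) = k by omega, show k - i + (j - k) = j - i by omega] at h3
    exact h3
  unfold bpref
  rw [← key, List.map_append, List.prod_append]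

theorem bgen_comm_bpref {k i j : ℕ} (h : ∀ t, i ≤ t → t < j → t + 2 ≤ k ∨ k + 2 ≤ t) :
    Commute (bgen n k) (bpref n i j) := by
  apply Commute.list_prod_right
  intro x hx
  obtain ⟨t, ht, rfl⟩ := List.mem_map.1 hx
  rw [List.mem_range'_1] at ht
  rcases h t ht.1 (by omega) with h' | h'
  · exact (bgen_comm h').symm
  · exact bgen_comm h'

/-! ### halfTwist lemmas -/

theorem halfTwist_pair (r : ℕ) : halfTwist n r (r + 1) = bgen n r := by
  simp [halfTwist, bpref_nil (le_refl r)]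

theorem bgen_comm_halfTwist_far {k r s : ℕ} (hrs : r < s) (h : k + 2 ≤ r ∨ s + 1 ≤ k) :
    Commute (bgen n k) (halfTwist n r s) := by
  have hp : Commute (bgen n k) (bpref n r (s - 1)) := by
    apply bgen_comm_bpref
    intro t ht1 ht2
    rcases h with h' | h'
    · right; omega
    · left; omega
  have hg : Commute (bgen n k) (bgen n (s - 1)) := by
    rcases h with h' | h'
    · exact bgen_comm (by omega)
    · exact (bgen_comm (n := n) (by omega : (s - 1) + 2 ≤ k)).symm
  exact (hp.mul_right hg).mul_right hp.inv_right

/-! ### Conjugation moves on half twists -/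

theorem shift_lemma {r k s : ℕ} (h1 : r ≤ k) (h2 : k + 2 ≤ s) (h3 : k + 2 < n) :
    bpref n r s * bgen n k * (bpref n r s)⁻¹ = bgen n (k + 1) := by
  have hsplit : bpref n r s = bpref n r k * (bgen n k * bgen n (k + 1)) * bpref n (k + 2) s := by
    rw [bpref_split (i := r) (k := k) (j := s) h1 (by omega),
      bpref_split (i := k) (k := k + 2) (j := s) (by omega) h2,
      bpref_cons (show k < k + 2 by omega), bpref_concat (le_refl (k + 1)),
      bpref_nil (le_refl (k + 1))]
    group
  have hc1 : Commute (bgen n k) (bpref n (k + 2) s) :=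
    bgen_comm_bpref (fun t ht _ => Or.inr (by omega))
  have hc2 : Commute (bgen n (k + 1)) (bpref n r k) :=
    bgen_comm_bpref (fun t ht htt => Or.inl (by omega))
  rw [hsplit]
  have key : (bgen n k * bgen n (k + 1)) * bgen n k * (bgen n k * bgen n (k + 1))⁻¹ =
      bgen n (k + 1) := by
    have hb := bgen_braid (t := k) h3
    rw [mul_inv_rev, show bgen n k * bgen n (k + 1) * bgen n k = bgen n (k+1) * bgen n k * bgen n (k+1) from hb]
    group
  calc bpref n r k * (bgen n k * bgen n (k + 1)) * bpref n (k + 2) s * bgen n k *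
        (bpref n r k * (bgen n k * bgen n (k + 1)) * bpref n (k + 2) s)⁻¹
      = bpref n r k * ((bgen n k * bgen n (k + 1)) * (bpref n (k + 2) s * bgen n k *
          (bpref n (k + 2) s)⁻¹) * (bgen n k * bgen n (k + 1))⁻¹) * (bpref n r k)⁻¹ := by
        group
    _ = bpref n r k * bgen n (k + 1) * (bpref n r k)⁻¹ := by
        rw [show bpref n (k + 2) s * bgen n k * (bpref n (k + 2) s)⁻¹ = bgen n k by
          rw [← hc1.eq]; group]
        rw [key]
    _ = bgen n (k + 1) := by rw [← hc2.eq]; group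

theorem bgen_comm_halfTwist_int {k r s : ℕ} (h1 : r < k) (h2 : k + 1 < s) :
    Commute (bgen n k) (halfTwist n r s) := by
  by_cases hk : k < n - 1
  · have hW := shift_lemma (n := n) (r := r) (k := k - 1) (s := s - 1)
      (by omega) (by omega) (by omega)
    rw [show k - 1 + 1 = k by omega] at hW
    unfold halfTwist
    have hfar : Commute (bgen n (k - 1)) (bgen n (s - 1)) := bgen_comm (by omega)
    rw [← hW]
    set W := bpref n r (s - 1) with hWdef
    have : W * bgen n (k - 1) * W⁻¹ * (W * bgen n (s - 1) * W⁻¹) =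
        W * bgen n (s - 1) * W⁻¹ * (W * bgen n (k - 1) * W⁻¹) := by
      rw [show W * bgen n (k-1) * W⁻¹ * (W * bgen n (s-1) * W⁻¹) =
          W * (bgen n (k-1) * bgen n (s-1)) * W⁻¹ by group,
        show W * bgen n (s-1) * W⁻¹ * (W * bgen n (k-1) * W⁻¹) =
          W * (bgen n (s-1) * bgen n (k-1)) * W⁻¹ by group, hfar.eq]
    exact this
  · rw [bgen_out hk]; exact Commute.one_left _

/-- `C2`: extending the left endpoint. -/
theorem conj_left {r s : ℕ} (h : r + 1 < s) :
    bgen n r * halfTwist n (r + 1) s * (bgen n r)⁻¹ = halfTwist n r s := by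
  unfold halfTwist
  rw [bpref_cons (show r < s - 1 by omega)]
  group

/-- `C1'`: extending the right endpoint (inverse conjugation). -/
theorem conj_right {r s : ℕ} (h1 : r < s) (h2 : s + 1 < n) :
    (bgen n s)⁻¹ * halfTwist n r s * bgen n s = halfTwist n r (s + 1) := by
  have hW : Commute (bgen n s) (bpref n r (s - 1)) :=
    bgen_comm_bpref (n := n) (k := s) (i := r) (j := s - 1) (fun t ht htt => Or.inl (by omega))
  have hb := bgen_braid (n := n) (t := s - 1) (by omega)
  rw [show s - 1 + 1 = s by omega] at hb
  have hcc := bpref_concat (n := n) (i := r) (j := s - 1) (by omega)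
  rw [show s - 1 + 1 = s by omega] at hcc
  unfold halfTwist
  rw [show s + 1 - 1 = s by omega, hcc]
  have key : (bgen n s)⁻¹ * (bgen n (s - 1) * bgen n s) =
      bgen n (s - 1) * bgen n s * (bgen n (s - 1))⁻¹ := by
    refine mul_left_cancel (a := bgen n s) (mul_right_cancel (b := bgen n (s - 1)) ?_)
    calc bgen n s * ((bgen n s)⁻¹ * (bgen n (s - 1) * bgen n s)) * bgen n (s - 1)
        = bgen n (s - 1) * bgen n s * bgen n (s - 1) := by group
      _ = bgen n s * (bgen n (s - 1) * bgen n s) := by rw [hb]; group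
      _ = bgen n s * (bgen n (s - 1) * bgen n s * (bgen n (s - 1))⁻¹) * bgen n (s - 1) := by group
  have e1 : (bgen n s)⁻¹ * bpref n r (s - 1) = bpref n r (s - 1) * (bgen n s)⁻¹ := hW.inv_left.eq
  have e2 : (bpref n r (s - 1))⁻¹ * bgen n s = bgen n s * (bpref n r (s - 1))⁻¹ :=
    hW.inv_right.symm.eq
  calc (bgen n s)⁻¹ * (bpref n r (s - 1) * bgen n (s - 1) * (bpref n r (s - 1))⁻¹) * bgen n s
      = ((bgen n s)⁻¹ * bpref n r (s - 1)) * bgen n (s - 1) * ((bpref n r (s - 1))⁻¹ * bgen n s) := by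
        group
    _ = (bpref n r (s - 1) * (bgen n s)⁻¹) * bgen n (s - 1) * (bgen n s * (bpref n r (s - 1))⁻¹) := by
        rw [e1, e2]
    _ = bpref n r (s - 1) * ((bgen n s)⁻¹ * (bgen n (s - 1) * bgen n s)) * (bpref n r (s - 1))⁻¹ := by
        group
    _ = bpref n r (s - 1) * (bgen n (s - 1) * bgen n s * (bgen n (s - 1))⁻¹) * (bpref n r (s - 1))⁻¹ := by
        rw [key]
    _ = bpref n r (s - 1) * bgen n (s - 1) * bgen n s * (bpref n r (s - 1) * bgen n (s - 1))⁻¹ := by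
        group

/-- `C3`: shrinking the right endpoint (positive conjugation). -/
theorem conj_shrink {r s : ℕ} (h1 : r + 1 < s) (h2 : s < n) :
    bgen n (s - 1) * halfTwist n r s * (bgen n (s - 1))⁻¹ = halfTwist n r (s - 1) := by
  have h3 := conj_right (n := n) (r := r) (s := s - 1) (by omega) (by omega)
  rw [show s - 1 + 1 = s by omega] at h3
  rw [← h3]; group

/-! ### α, β, chain braid relations for half twists -/

section ConjHelpers
variable {G : Type*} [Group G]

theorem conj_comm_swap {g a x : G} (h : Commute g a) :
    a * (g⁻¹ * x * g) * a⁻¹ = g⁻¹ * (a * x * a⁻¹) * g := by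
  have e1 : a * g⁻¹ = g⁻¹ * a := h.symm.inv_right.eq
  have e2 : g * a⁻¹ = a⁻¹ * g := h.inv_right.eq
  calc a * (g⁻¹ * x * g) * a⁻¹ = (a * g⁻¹) * x * (g * a⁻¹) := by group
    _ = (g⁻¹ * a) * x * (a⁻¹ * g) := by rw [e1, e2]
    _ = g⁻¹ * (a * x * a⁻¹) * g := by group

theorem conj_push' {g x y : G} (h : Commute g y) :
    (g * x * g⁻¹) * y * (g * x * g⁻¹)⁻¹ = g * (x * y * x⁻¹) * g⁻¹ := by
  have e : g⁻¹ * y * g = y := by rw [show g⁻¹ * y * g = g⁻¹ * (y * g) by group, ← h.eq]; group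
  calc (g * x * g⁻¹) * y * (g * x * g⁻¹)⁻¹ = g * x * (g⁻¹ * y * g) * x⁻¹ * g⁻¹ := by group
    _ = g * (x * y * x⁻¹) * g⁻¹ := by rw [e]; group

theorem conj_push_beta {g x a : G} (h : Commute g a) :
    (g⁻¹ * x * g)⁻¹ * a * (g⁻¹ * x * g) = g⁻¹ * (x⁻¹ * a * x) * g := by
  have e : g * a * g⁻¹ = a := by rw [h.eq]; group
  calc (g⁻¹ * x * g)⁻¹ * a * (g⁻¹ * x * g)
      = g⁻¹ * (x⁻¹ * (g * a * g⁻¹) * x) * g := by group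
    _ = g⁻¹ * (x⁻¹ * a * x) * g := by rw [e]

theorem conj_push_beta' {g x b : G} (h : Commute g b) :
    b⁻¹ * (g * x * g⁻¹) * b = g * (b⁻¹ * x * b) * g⁻¹ := by
  have e1 : b⁻¹ * g = g * b⁻¹ := h.symm.inv_left.eq
  have e2 : g⁻¹ * b = b * g⁻¹ := h.inv_left.eq
  calc b⁻¹ * (g * x * g⁻¹) * b = (b⁻¹ * g) * x * (g⁻¹ * b) := by group
    _ = (g * b⁻¹) * x * (b * g⁻¹) := by rw [e1, e2]
    _ = g * (b⁻¹ * x * b) * g⁻¹ := by group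

end ConjHelpers

theorem alphaH_base {r u : ℕ} (h2 : r + 1 < u) (h3 : u < n) :
    halfTwist n r (r + 1) * halfTwist n (r + 1) u * (halfTwist n r (r + 1))⁻¹ =
      halfTwist n r u := by
  induction u, h2 using Nat.le_induction with
  | base =>
    simp only [Nat.succ_eq_add_one]
    rw [halfTwist_pair, halfTwist_pair]
    unfold halfTwist
    have hb : bpref n r (r + 1 + 1 - 1) = bgen n r := by
      rw [show r + 1 + 1 - 1 = r + 1 from rfl, bpref_concat (le_refl r), bpref_nil (le_refl r),
        one_mul]
    rw [hb, show r + 1 + 1 - 1 = r + 1 from rfl]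
  | succ u hu ih =>
    have ih' := ih (by omega)
    have hstep := conj_right (n := n) (r := r + 1) (s := u) (by omega) (by omega)
    have hstep2 := conj_right (n := n) (r := r) (s := u) (by omega) (by omega)
    have hcomm : Commute (bgen n u) (halfTwist n r (r + 1)) :=
      bgen_comm_halfTwist_far (by omega) (Or.inr (by omega))
    rw [← hstep, ← hstep2, ← ih', conj_comm_swap hcomm]

theorem alphaH_aux : ∀ d {r m u : ℕ}, m = r + 1 + d → m < u → u < n →
    halfTwist n r m * halfTwist n m u * (halfTwist n r m)⁻¹ = halfTwist n r u := by
  intro d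
  induction d with
  | zero =>
    intro r m u hm h2 h3
    subst hm
    exact alphaH_base h2 h3
  | succ d ih =>
    intro r m u hm h2 h3
    have ih' := ih (r := r + 1) (m := m) (u := u) (by omega) h2 h3
    have hcl : bgen n r * halfTwist n (r + 1) m * (bgen n r)⁻¹ = halfTwist n r m :=
      conj_left (by omega)
    have hcl2 : bgen n r * halfTwist n (r + 1) u * (bgen n r)⁻¹ = halfTwist n r u :=
      conj_left (by omega)
    have hcomm : Commute (bgen n r) (halfTwist n m u) :=
      bgen_comm_halfTwist_far (by omega) (Or.inl (by omega))
    rw [← hcl, ← hcl2, ← ih', conj_push' hcomm]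

theorem alphaH {r m u : ℕ} (h1 : r < m) (h2 : m < u) (h3 : u < n) :
    halfTwist n r m * halfTwist n m u * (halfTwist n r m)⁻¹ = halfTwist n r u :=
  alphaH_aux (m - r - 1) (by omega) h2 h3

theorem betaH_base {r u : ℕ} (h2 : r + 1 < u) (h3 : u < n) :
    (halfTwist n (r + 1) u)⁻¹ * halfTwist n r (r + 1) * halfTwist n (r + 1) u =
      halfTwist n r u := by
  induction u, h2 using Nat.le_induction with
  | base =>
    simp only [Nat.succ_eq_add_one]
    rw [halfTwist_pair, halfTwist_pair]
    unfold halfTwist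
    have hb : bpref n r (r + 1 + 1 - 1) = bgen n r := by
      rw [show r + 1 + 1 - 1 = r + 1 from rfl, bpref_concat (le_refl r), bpref_nil (le_refl r),
        one_mul]
    rw [hb, show r + 1 + 1 - 1 = r + 1 from rfl]
    have hbr := bgen_braid (n := n) (t := r) (by omega)
    refine mul_left_cancel (a := bgen n (r + 1)) (mul_right_cancel (b := bgen n r) ?_)
    calc bgen n (r + 1) * ((bgen n (r + 1))⁻¹ * bgen n r * bgen n (r + 1)) * bgen n r
        = bgen n r * bgen n (r + 1) * bgen n r := by group
      _ = bgen n (r + 1) * bgen n r * bgen n (r + 1) := hbr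
      _ = bgen n (r + 1) * (bgen n r * bgen n (r + 1) * (bgen n r)⁻¹) * bgen n r := by group
  | succ u hu ih =>
    have ih' := ih (by omega)
    have hstep := conj_right (n := n) (r := r + 1) (s := u) (by omega) (by omega)
    have hstep2 := conj_right (n := n) (r := r) (s := u) (by omega) (by omega)
    have hcomm : Commute (bgen n u) (halfTwist n r (r + 1)) :=
      bgen_comm_halfTwist_far (by omega) (Or.inr (by omega))
    rw [← hstep, ← hstep2, ← ih', conj_push_beta hcomm]

theorem betaH_aux : ∀ d {r m u : ℕ}, m = r + 1 + d → m < u → u < n →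
    (halfTwist n m u)⁻¹ * halfTwist n r m * halfTwist n m u = halfTwist n r u := by
  intro d
  induction d with
  | zero =>
    intro r m u hm h2 h3
    subst hm
    exact betaH_base h2 h3
  | succ d ih =>
    intro r m u hm h2 h3
    have ih' := ih (r := r + 1) (m := m) (u := u) (by omega) h2 h3
    have hcl : bgen n r * halfTwist n (r + 1) m * (bgen n r)⁻¹ = halfTwist n r m :=
      conj_left (by omega)
    have hcl2 : bgen n r * halfTwist n (r + 1) u * (bgen n r)⁻¹ = halfTwist n r u :=
      conj_left (by omega)
    have hcomm : Commute (bgen n r) (halfTwist n m u) :=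
      bgen_comm_halfTwist_far (by omega) (Or.inl (by omega))
    rw [← hcl, ← hcl2, ← ih', conj_push_beta' hcomm]

theorem betaH {r m u : ℕ} (h1 : r < m) (h2 : m < u) (h3 : u < n) :
    (halfTwist n m u)⁻¹ * halfTwist n r m * halfTwist n m u = halfTwist n r u :=
  betaH_aux (m - r - 1) (by omega) h2 h3

theorem chain_braid {r m u : ℕ} (h1 : r < m) (h2 : m < u) (h3 : u < n) :
    halfTwist n r m * halfTwist n m u * halfTwist n r m =
      halfTwist n m u * halfTwist n r m * halfTwist n m u := by
  have ha := alphaH h1 h2 h3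
  have hb := betaH h1 h2 h3
  have e1 : halfTwist n r m * halfTwist n m u = halfTwist n r u * halfTwist n r m := by
    rw [← ha]; group
  have e2 : halfTwist n r m * halfTwist n m u = halfTwist n m u * halfTwist n r u := by
    rw [← hb]; group
  calc halfTwist n r m * halfTwist n m u * halfTwist n r m
      = halfTwist n m u * halfTwist n r u * halfTwist n r m := by rw [← e2]
    _ = halfTwist n m u * (halfTwist n r u * halfTwist n r m) := by group
    _ = halfTwist n m u * (halfTwist n r m * halfTwist n m u) := by
        rw [show halfTwist n r u * halfTwist n r m =
          halfTwist n r m * halfTwist n m u from by rw [← ha]; group]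
    _ = halfTwist n m u * halfTwist n r m * halfTwist n m u := by group

theorem halfTwist_comm_far {r s u w : ℕ} (hrs : r < s) (huw : u < w) (h : s + 1 ≤ u) :
    Commute (halfTwist n r s) (halfTwist n u w) := by
  have hkey : ∀ k, r ≤ k → k ≤ s - 1 → Commute (bgen n k) (halfTwist n u w) := by
    intro k hk1 hk2
    exact bgen_comm_halfTwist_far huw (Or.inl (by omega))
  have hp : Commute (bpref n r (s - 1)) (halfTwist n u w) := by
    apply Commute.list_prod_left
    intro x hx
    obtain ⟨t, ht, rfl⟩ := List.mem_map.1 hx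
    rw [List.mem_range'_1] at ht
    exact hkey t ht.1 (by omega)
  exact (hp.mul_left (hkey (s - 1) (by omega) (le_refl _))).mul_left hp.inv_left

/-! ### The quotient by the candidate normal generators -/

theorem commute_conj {G : Type*} [Group G] {x y : G} (h : Commute x y) (g : G) :
    Commute (g * x * g⁻¹) (g * y * g⁻¹) := by
  have e1 : (g * x * g⁻¹) * (g * y * g⁻¹) = g * (x * y) * g⁻¹ := by group
  have e2 : (g * y * g⁻¹) * (g * x * g⁻¹) = g * (y * x) * g⁻¹ := by group
  unfold Commute SemiconjBy
  rw [e1, e2, h.eq]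

def genSet (n : ℕ) : Set (BraidGroup n) :=
  ({x : BraidGroup n | ∃ i : ℕ, i < n - 1 ∧
      x = ⁅(bgen n i) ^ 2, (bgen n (i + 1)) ^ 2⁆} ∪
    {x : BraidGroup n | ∃ i : ℕ, i + 4 < n ∧
      x = ⁅(bb n i (i + 2)) ^ 2, (bb n (i + 1) (i + 3)) ^ 2⁆} ∪
    {x : BraidGroup n | ∃ i : ℕ, i < n - 1 ∧ x = (bgen n i) ^ 4})

def NN (n : ℕ) : Subgroup (BraidGroup n) := Subgroup.normalClosure (genSet n)

instance NN_normal (n : ℕ) : (NN n).Normal := Subgroup.normalClosure_normal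

def qmap (n : ℕ) : BraidGroup n →* (BraidGroup n ⧸ NN n) := QuotientGroup.mk' (NN n)

theorem qmap_eq_one {x : BraidGroup n} (h : x ∈ NN n) : qmap n x = 1 :=
  (QuotientGroup.eq_one_iff x).2 h

theorem qmap_eq_one_iff {x : BraidGroup n} : qmap n x = 1 ↔ x ∈ NN n :=
  QuotientGroup.eq_one_iff x

/-- The image of the squared half twist in the quotient. -/
noncomputable def aa (n r s : ℕ) : BraidGroup n ⧸ NN n := qmap n (halfTwist n r s) ^ 2

theorem seed1 {i : ℕ} (h : i < n - 1) :
    Commute (qmap n (bgen n i) ^ 2) (qmap n (bgen n (i + 1)) ^ 2) := by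
  have hm : ⁅(bgen n i) ^ 2, (bgen n (i + 1)) ^ 2⁆ ∈ NN n :=
    Subgroup.subset_normalClosure (Or.inl (Or.inl ⟨i, h, rfl⟩))
  have := qmap_eq_one hm
  rw [map_commutatorElement, map_pow, map_pow] at this
  exact commutatorElement_eq_one_iff_commute.1 this

theorem seed3 {i : ℕ} (h : i < n - 1) : qmap n (bgen n i) ^ 4 = 1 := by
  have hm : (bgen n i) ^ 4 ∈ NN n :=
    Subgroup.subset_normalClosure (Or.inr ⟨i, h, rfl⟩)
  have := qmap_eq_one hm
  rwa [map_pow] at this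

theorem bgen_pow4 (t : ℕ) : qmap n (bgen n t) ^ 4 = 1 := by
  by_cases h : t < n - 1
  · exact seed3 h
  · rw [bgen_out h]; simp

theorem aa_invol {r s : ℕ} (h : r < s) : aa n r s ^ 2 = 1 := by
  unfold aa halfTwist
  rw [map_mul, map_mul, map_inv, ← pow_mul, show (2 : ℕ) * 2 = 4 from rfl, conj_pow,
    bgen_pow4]
  group

/-- transport of a conjugation identity on half twists to the quotient squares -/
theorem aa_conj {g : BraidGroup n} {r s r' s' : ℕ}
    (e : g * halfTwist n r s * g⁻¹ = halfTwist n r' s') :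
    qmap n g * aa n r s * (qmap n g)⁻¹ = aa n r' s' := by
  unfold aa
  rw [← e, map_mul, map_mul, map_inv, conj_pow]

theorem aa_comm_of_comm {g : BraidGroup n} {r s : ℕ}
    (h : Commute g (halfTwist n r s)) : Commute (qmap n g) (aa n r s) :=
  (h.map (qmap n)).pow_right 2

theorem chainC_base {r u : ℕ} (h2 : r + 1 < u) (h3 : u < n) :
    Commute (aa n r (r + 1)) (aa n (r + 1) u) := by
  induction u, h2 using Nat.le_induction with
  | base =>
    simp only [Nat.succ_eq_add_one]
    have e1 : aa n r (r + 1) = qmap n (bgen n r) ^ 2 := by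
      unfold aa; rw [halfTwist_pair]
    have e2 : aa n (r + 1) (r + 1 + 1) = qmap n (bgen n (r + 1)) ^ 2 := by
      unfold aa; rw [halfTwist_pair]
    rw [e1, e2]
    exact seed1 (by omega)
  | succ u hu ih =>
    have ih' := ih (by omega)
    have he1 : (bgen n u)⁻¹ * halfTwist n (r + 1) u * bgen n u = halfTwist n (r + 1) (u + 1) :=
      conj_right (by omega) (by omega)
    have he2 : (bgen n u)⁻¹ * halfTwist n r (r + 1) * bgen n u = halfTwist n r (r + 1) := by
      rw [show (bgen n u)⁻¹ * halfTwist n r (r + 1) * bgen n u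
          = (bgen n u)⁻¹ * (halfTwist n r (r + 1) * bgen n u) by group,
        ← (bgen_comm_halfTwist_far (n := n) (by omega) (Or.inr (by omega))).eq]
      group
    have h1 := aa_conj (n := n) (g := (bgen n u)⁻¹) (by rw [inv_inv]; exact he1)
    have h2 := aa_conj (n := n) (g := (bgen n u)⁻¹) (by rw [inv_inv]; exact he2)
    rw [← h1, ← h2]
    exact commute_conj ih' _

theorem chainC_aux : ∀ d {r m u : ℕ}, m = r + 1 + d → m < u → u < n →
    Commute (aa n r m) (aa n m u) := by
  intro d
  induction d with
  | zero =>
    intro r m u hm h2 h3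
    subst hm
    exact chainC_base h2 h3
  | succ d ih =>
    intro r m u hm h2 h3
    have ih' := ih (r := r + 1) (m := m) (u := u) (by omega) h2 h3
    have he1 : bgen n r * halfTwist n (r + 1) m * (bgen n r)⁻¹ = halfTwist n r m :=
      conj_left (by omega)
    have he2 : bgen n r * halfTwist n m u * (bgen n r)⁻¹ = halfTwist n m u := by
      rw [(bgen_comm_halfTwist_far (n := n) (by omega) (Or.inl (by omega))).eq]
      group
    rw [← aa_conj (n := n) he1, ← aa_conj (n := n) he2]
    exact commute_conj ih' _

/-- All "chain" pairs of squared half twists commute in the quotient. -/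
theorem chainC {r m u : ℕ} (h1 : r < m) (h2 : m < u) (h3 : u < n) :
    Commute (aa n r m) (aa n m u) :=
  chainC_aux (m - r - 1) (by omega) h2 h3

/-- sharing the left endpoint -/
theorem shareMin {r m u : ℕ} (h1 : r < m) (h2 : m < u) (h3 : u < n) :
    Commute (aa n r m) (aa n r u) := by
  have hA := alphaH h1 h2 h3
  have e : qmap n (halfTwist n r m) * aa n m u * (qmap n (halfTwist n r m))⁻¹ = aa n r u :=
    aa_conj (n := n) hA
  have base : Commute (aa n r m) (aa n m u) := chainC h1 h2 h3
  have := commute_conj base (qmap n (halfTwist n r m))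
  rw [e] at this
  have e2 : qmap n (halfTwist n r m) * aa n r m * (qmap n (halfTwist n r m))⁻¹ = aa n r m := by
    unfold aa
    group
  rwa [e2] at this

/-- sharing the right endpoint -/
theorem shareMax {r m u : ℕ} (h1 : r < m) (h2 : m < u) (h3 : u < n) :
    Commute (aa n r u) (aa n m u) := by
  have hB := betaH h1 h2 h3
  have e : (qmap n (halfTwist n m u))⁻¹ * aa n r m * qmap n (halfTwist n m u) = aa n r u := by
    have := aa_conj (n := n) (g := (halfTwist n m u)⁻¹)
      (by rw [inv_inv]; exact hB)
    rwa [map_inv, inv_inv] at this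
  have base : Commute (aa n r m) (aa n m u) := chainC h1 h2 h3
  have := commute_conj base (qmap n (halfTwist n m u))⁻¹
  rw [inv_inv] at this
  rw [e] at this
  have e2 : (qmap n (halfTwist n m u))⁻¹ * aa n m u * qmap n (halfTwist n m u) = aa n m u := by
    unfold aa
    group
  rwa [e2] at this

end St18

namespace St18
variable {n : ℕ}

theorem quad_main {r m u w : ℕ} (h1 : r < m) (h2 : m < u) (h3 : u < w) (h4 : w < n) :
    ∃ D : BraidGroup n ⧸ NN n,
      D = aa n r m * aa n m u * aa n r u * aa n u w * aa n m w * aa n r w ∧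
      Commute D (aa n r u) ∧ Commute D (aa n m u) := by
  set x := halfTwist n r m with hx
  set y := halfTwist n m u with hy
  set z := halfTwist n u w with hz
  have hxy : x * y * x = y * x * y := chain_braid h1 h2 (by omega)
  have hyz : y * z * y = z * y * z := chain_braid h2 h3 h4
  have hxz : x * z = z * x := (halfTwist_comm_far h1 h3 (by omega)).eq
  have hP : x * y * x⁻¹ = halfTwist n r u := alphaH h1 h2 (by omega)
  have hQ : y * z * y⁻¹ = halfTwist n m w := alphaH h2 h3 h4
  have hR : x * (y * z * y⁻¹) * x⁻¹ = halfTwist n r w := by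
    rw [hQ]; exact alphaH h1 (by omega) h4
  have hI4 := deltaSq_eq hxy hyz hxz
  have hDx : (x * y * z * x * y * x) * x = z * (x * y * z * x * y * x) :=
    delta_x hxy hyz hxz
  have hDy : (x * y * z * x * y * x) * y = y * (x * y * z * x * y * x) :=
    delta_y hxy hyz hxz
  have hDz : (x * y * z * x * y * x) * z = x * (x * y * z * x * y * x) :=
    delta_z hxy hyz hxz
  set Δ := x * y * z * x * y * x with hΔ
  have hC2x : Commute (Δ * Δ) x := by
    show Δ * Δ * x = x * (Δ * Δ)
    calc Δ * Δ * x = Δ * (Δ * x) := by group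
      _ = Δ * (z * Δ) := by rw [hDx]
      _ = (Δ * z) * Δ := by group
      _ = (x * Δ) * Δ := by rw [hDz]
      _ = x * (Δ * Δ) := by group
  have hC2z : Commute (Δ * Δ) z := by
    show Δ * Δ * z = z * (Δ * Δ)
    calc Δ * Δ * z = Δ * (Δ * z) := by group
      _ = Δ * (x * Δ) := by rw [hDz]
      _ = (Δ * x) * Δ := by group
      _ = (z * Δ) * Δ := by rw [hDx]
      _ = z * (Δ * Δ) := by group
  have hC2y : Commute (Δ * Δ) y := by
    show Δ * Δ * y = y * (Δ * Δ)
    calc Δ * Δ * y = Δ * (Δ * y) := by group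
      _ = Δ * (y * Δ) := by rw [hDy]
      _ = (Δ * y) * Δ := by group
      _ = y * (Δ * Δ) := by rw [hDy]; group
  have hCP : Commute (Δ * Δ) (halfTwist n r u) := by
    rw [← hP]
    exact (hC2x.mul_right hC2y).mul_right hC2x.inv_right
  have hCY : Commute (Δ * Δ) (halfTwist n m u) := hC2y
  refine ⟨qmap n (Δ * Δ), ?_, ?_, ?_⟩
  · rw [hI4, hR, hQ, hP]
    unfold aa
    rw [map_mul, map_mul, map_mul, map_mul, map_mul, map_pow, map_pow, map_pow, map_pow,
      map_pow, map_pow]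
  · exact (hCP.map (qmap n)).pow_right 2
  · exact (hCY.map (qmap n)).pow_right 2

/-- linked pairs commute in the quotient -/
theorem linkedC {r m u w : ℕ} (h1 : r < m) (h2 : m < u) (h3 : u < w) (h4 : w < n) :
    Commute (aa n r u) (aa n m w) := by
  obtain ⟨D, hD, hP, _⟩ := quad_main h1 h2 h3 h4
  set X := aa n r m
  set Y := aa n m u
  set P := aa n r u
  set Z := aa n u w
  set Q := aa n m w
  set R := aa n r w
  have c1 : Commute P X := (shareMin h1 h2 (by omega)).symm
  have c2 : Commute P Y := shareMax h1 h2 (by omega)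
  have c3 : Commute P Z := chainC (by omega) h3 h4
  have c4 : Commute P R := shareMin (by omega) h3 h4
  have e1 : P * (X * Y * P * Z * Q * R) = (X * Y * P * Z * Q * R) * P := by
    rw [← hD]; exact hP.symm.eq
  have e2 : P * (X * Y * P * Z * Q * R) = X * Y * P * Z * (P * Q) * R := by
    calc P * (X * Y * P * Z * Q * R) = (P * X) * Y * P * Z * Q * R := by group
      _ = (X * P) * Y * P * Z * Q * R := by rw [c1.eq]
      _ = X * (P * Y) * P * Z * Q * R := by group
      _ = X * (Y * P) * P * Z * Q * R := by rw [c2.eq]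
      _ = X * Y * P * (P * Z) * Q * R := by group
      _ = X * Y * P * (Z * P) * Q * R := by rw [c3.eq]
      _ = X * Y * P * Z * (P * Q) * R := by group
  have e3 : (X * Y * P * Z * Q * R) * P = X * Y * P * Z * (Q * P) * R := by
    calc (X * Y * P * Z * Q * R) * P = X * Y * P * Z * Q * (R * P) := by group
      _ = X * Y * P * Z * Q * (P * R) := by rw [← c4.eq]
      _ = X * Y * P * Z * (Q * P) * R := by group
  have e4 : X * Y * P * Z * (P * Q) * R = X * Y * P * Z * (Q * P) * R := by
    rw [← e2, e1, e3]
  exact mul_left_cancel (mul_right_cancel e4)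

/-- nested pairs commute in the quotient -/
theorem nestedC {r m u w : ℕ} (h1 : r < m) (h2 : m < u) (h3 : u < w) (h4 : w < n) :
    Commute (aa n r w) (aa n m u) := by
  obtain ⟨D, hD, _, hY⟩ := quad_main h1 h2 h3 h4
  set X := aa n r m
  set Y := aa n m u
  set P := aa n r u
  set Z := aa n u w
  set Q := aa n m w
  set R := aa n r w
  have d1 : Commute Y X := (chainC h1 h2 (by omega)).symm
  have d2 : Commute Y P := (shareMax h1 h2 (by omega)).symm
  have d3 : Commute Y Z := chainC h2 h3 h4
  have d4 : Commute Y Q := shareMin h2 (by omega) h4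
  have e1 : Y * (X * Y * P * Z * Q * R) = (X * Y * P * Z * Q * R) * Y := by
    rw [← hD]; exact hY.symm.eq
  have e2 : Y * (P * Z * Q * R) = (P * Z * Q * R) * Y := by
    apply mul_left_cancel (a := X * Y)
    calc (X * Y) * (Y * (P * Z * Q * R)) = (Y * X) * (Y * (P * Z * Q * R)) := by rw [d1.eq]
      _ = Y * (X * Y * P * Z * Q * R) := by group
      _ = (X * Y * P * Z * Q * R) * Y := e1
      _ = (X * Y) * ((P * Z * Q * R) * Y) := by group
  have e3 : P * Z * Q * (Y * R) = P * Z * Q * (R * Y) := by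
    calc P * Z * Q * (Y * R) = P * Z * (Q * Y) * R := by group
      _ = P * Z * (Y * Q) * R := by rw [← d4.eq]
      _ = P * (Z * Y) * Q * R := by group
      _ = P * (Y * Z) * Q * R := by rw [← d3.eq]
      _ = (P * Y) * Z * Q * R := by group
      _ = (Y * P) * Z * Q * R := by rw [← d2.eq]
      _ = Y * (P * Z * Q * R) := by group
      _ = (P * Z * Q * R) * Y := e2
      _ = P * Z * Q * (R * Y) := by group
  have e4 : Commute Y R := mul_left_cancel e3
  exact e4.symm

end St18

namespace St18
variable {n : ℕ}

theorem unlinkedC {r s t u : ℕ} (h1 : r < s) (h2 : t < u) (h3 : s + 1 ≤ t) :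
    Commute (aa n r s) (aa n t u) :=
  (((halfTwist_comm_far h1 h2 h3).map (qmap n)).pow_left 2).pow_right 2

theorem allComm {r s t u : ℕ} (h1 : r < s) (h2 : s < n) (h3 : t < u) (h4 : u < n) :
    Commute (aa n r s) (aa n t u) := by
  rcases Nat.lt_trichotomy s t with h | h | h
  · exact unlinkedC h1 h3 (by omega)
  · subst h; exact chainC h1 h3 h4
  · rcases Nat.lt_trichotomy u r with g | g | g
    · exact (unlinkedC h3 h1 (by omega)).symm
    · subst g; exact (chainC h3 h1 h2).symm
    · rcases Nat.lt_trichotomy r t with i | i | i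
      · rcases Nat.lt_trichotomy s u with j | j | j
        · exact linkedC i h j h4
        · subst j; exact shareMax i h h2
        · exact nestedC i h3 j h2
      · subst i
        rcases Nat.lt_trichotomy s u with j | j | j
        · exact shareMin h1 j h4
        · subst j; exact Commute.refl _
        · exact (shareMin h3 j h2).symm
      · rcases Nat.lt_trichotomy s u with j | j | j
        · exact (nestedC i h1 j h4).symm
        · subst j; exact (shareMax i h1 h2).symm
        · exact (linkedC i g j h2).symm

/-! ### The subgroup M -/

def Mgen (n : ℕ) : Set (BraidGroup n ⧸ NN n) := {g | ∃ r s, r < s ∧ s < n ∧ g = aa n r s}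

def MM (n : ℕ) : Subgroup (BraidGroup n ⧸ NN n) := Subgroup.closure (Mgen n)

theorem aa_mem {r s : ℕ} (h1 : r < s) (h2 : s < n) : aa n r s ∈ MM n :=
  Subgroup.subset_closure ⟨r, s, h1, h2, rfl⟩

theorem MM_comm {x y : BraidGroup n ⧸ NN n} (hx : x ∈ MM n) (hy : y ∈ MM n) :
    Commute x y := by
  induction hx using Subgroup.closure_induction with
  | mem z hz =>
    induction hy using Subgroup.closure_induction with
    | mem w hw =>
      obtain ⟨r, s, h1, h2, rfl⟩ := hz
      obtain ⟨t, u, h3, h4, rfl⟩ := hw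
      exact allComm h1 h2 h3 h4
    | one => exact Commute.one_right _
    | mul a b _ _ ha hb => exact ha.mul_right hb
    | inv a _ ha => exact ha.inv_right
  | one => exact Commute.one_left _
  | mul a b _ _ ha hb => exact ha.mul_left hb
  | inv a _ ha => exact ha.inv_left

theorem MM_sq {x : BraidGroup n ⧸ NN n} (hx : x ∈ MM n) : x ^ 2 = 1 := by
  induction hx using Subgroup.closure_induction with
  | mem z hz => obtain ⟨r, s, h1, h2, rfl⟩ := hz; exact aa_invol h1
  | one => simp
  | mul a b ha hb pa pb =>
    rw [(MM_comm ha hb).mul_pow, pa, pb, one_mul]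
  | inv a _ pa => rw [inv_pow, pa, inv_one]

/-! ### conjugation of the generators of M -/

theorem qsq (k : ℕ) : qmap n (bgen n k) ^ 2 = aa n k (k + 1) := by
  unfold aa; rw [halfTwist_pair]

theorem aa_conj_inv' {g : BraidGroup n} {r s r' s' : ℕ}
    (e : g * halfTwist n r s * g⁻¹ = halfTwist n r' s') :
    (qmap n g)⁻¹ * aa n r' s' * qmap n g = aa n r s := by
  rw [← aa_conj (n := n) e]; group

theorem aa_conj_invform {g : BraidGroup n} {r s r' s' : ℕ}
    (e : g⁻¹ * halfTwist n r s * g = halfTwist n r' s') :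
    (qmap n g)⁻¹ * aa n r s * qmap n g = aa n r' s' := by
  have := aa_conj (n := n) (g := g⁻¹) (by rw [inv_inv]; exact e)
  rwa [map_inv, inv_inv] at this

theorem conj_to_sq {G : Type*} [Group G] {g x y : G} (h : y = g⁻¹ * x * g) :
    g⁻¹ * y * g = (g ^ 2)⁻¹ * x * g ^ 2 := by
  rw [h, pow_two]; group

theorem conj_to_sq' {G : Type*} [Group G] {g x y : G} (h : y = g * x * g⁻¹) :
    g * y * g⁻¹ = g ^ 2 * x * (g ^ 2)⁻¹ := by
  rw [h, pow_two]; group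

theorem sandwich_mem {c x : BraidGroup n ⧸ NN n} (hc : c ∈ MM n) (hx : x ∈ MM n) :
    c⁻¹ * x * c ∈ MM n := mul_mem (mul_mem (inv_mem hc) hx) hc

theorem sandwich_mem' {c x : BraidGroup n ⧸ NN n} (hc : c ∈ MM n) (hx : x ∈ MM n) :
    c * x * c⁻¹ ∈ MM n := mul_mem (mul_mem hc hx) (inv_mem hc)

theorem conj_gen_mem {k r s : ℕ} (hk : k < n - 1) (h1 : r < s) (h2 : s < n) :
    qmap n (bgen n k) * aa n r s * (qmap n (bgen n k))⁻¹ ∈ MM n ∧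
    (qmap n (bgen n k))⁻¹ * aa n r s * qmap n (bgen n k) ∈ MM n := by
  have haa := aa_mem (n := n) h1 h2
  by_cases hcom : (k + 1 < r) ∨ (s + 1 ≤ k) ∨ (r < k ∧ k + 1 < s) ∨ (k = r ∧ r + 1 = s)
  · have hc : Commute (qmap n (bgen n k)) (aa n r s) := by
      rcases hcom with h | h | h | h
      · exact aa_comm_of_comm (bgen_comm_halfTwist_far h1 (Or.inl (by omega)))
      · exact aa_comm_of_comm (bgen_comm_halfTwist_far h1 (Or.inr (by omega)))
      · exact aa_comm_of_comm (bgen_comm_halfTwist_int h.1 h.2)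
      · obtain ⟨hkr, hrs⟩ := h
        subst hkr
        rw [← hrs, ← qsq]
        exact (Commute.refl _).pow_right 2
    constructor
    · rw [show qmap n (bgen n k) * aa n r s * (qmap n (bgen n k))⁻¹ = aa n r s from by
        rw [hc.eq]; group]
      exact haa
    · rw [show (qmap n (bgen n k))⁻¹ * aa n r s * qmap n (bgen n k) = aa n r s from by
        rw [show (qmap n (bgen n k))⁻¹ * aa n r s * qmap n (bgen n k)
            = (qmap n (bgen n k))⁻¹ * (aa n r s * qmap n (bgen n k)) by group,
          ← hc.eq]; group]
      exact haa
  · push_neg at hcom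
    obtain ⟨hc1, hc2, hc3, hc4⟩ := hcom
    by_cases hA : k + 1 = r
    · -- k + 1 = r
      have e : bgen n k * halfTwist n (k + 1) s * (bgen n k)⁻¹ = halfTwist n k s :=
        conj_left (by omega)
      have hpos := aa_conj (n := n) e
      subst hA
      constructor
      · rw [hpos]; exact aa_mem (by omega) h2
      · have h5 : aa n (k + 1) s = (qmap n (bgen n k))⁻¹ * aa n k s * qmap n (bgen n k) := by
          rw [← hpos]; group
        rw [conj_to_sq h5, qsq]
        exact sandwich_mem (aa_mem (by omega) (by omega)) (aa_mem (by omega) h2)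
    · by_cases hB : k = r
      · -- k = r, r + 1 < s
        have hrs : r + 1 < s := by
          have h6 := hc4 hB
          omega
        subst hB
        have e : bgen n k * halfTwist n (k + 1) s * (bgen n k)⁻¹ = halfTwist n k s :=
          conj_left (by omega)
        have hpos := aa_conj (n := n) e
        constructor
        · have h5 : aa n k s = qmap n (bgen n k) * aa n (k + 1) s * (qmap n (bgen n k))⁻¹ :=
            hpos.symm
          rw [conj_to_sq' h5, qsq]
          exact sandwich_mem' (aa_mem (by omega) (by omega)) (aa_mem (by omega) h2)
        · rw [aa_conj_inv' e]
          exact aa_mem (by omega) h2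
      · by_cases hC : k + 1 = s
        · -- k = s - 1 > r
          have hrk : r < k := by omega
          have e : bgen n k * halfTwist n r s * (bgen n k)⁻¹ = halfTwist n r k := by
            have := conj_shrink (n := n) (r := r) (s := s) (by omega) h2
            rwa [show s - 1 = k from by omega] at this
          have hpos := aa_conj (n := n) e
          constructor
          · rw [hpos]; exact aa_mem (by omega) (by omega)
          · have h5 : aa n r s = (qmap n (bgen n k))⁻¹ * aa n r k * qmap n (bgen n k) := by
              rw [← hpos]; group
            rw [conj_to_sq h5, qsq]
            exact sandwich_mem (aa_mem (by omega) (by omega)) (aa_mem (by omega) (by omega))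
        · -- k = s
          have hks : k = s := by omega
          subst hks
          have e : (bgen n k)⁻¹ * halfTwist n r k * bgen n k = halfTwist n r (k + 1) :=
            conj_right h1 (by omega)
          have hinv := aa_conj_invform (n := n) e
          constructor
          · have h5 : aa n r k = qmap n (bgen n k) * aa n r (k + 1) * (qmap n (bgen n k))⁻¹ := by
              rw [← hinv]; group
            rw [conj_to_sq' h5, qsq]
            exact sandwich_mem' (aa_mem (by omega) (by omega)) (aa_mem (by omega) (by omega))
          · rw [hinv]
            exact aa_mem (by omega) (by omega)

theorem conj_MM_pos {k : ℕ} (hk : k < n - 1) {x : BraidGroup n ⧸ NN n} (hx : x ∈ MM n) :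
    qmap n (bgen n k) * x * (qmap n (bgen n k))⁻¹ ∈ MM n := by
  induction hx using Subgroup.closure_induction with
  | mem z hz =>
    obtain ⟨r, s, h1, h2, rfl⟩ := hz
    exact (conj_gen_mem hk h1 h2).1
  | one =>
    rw [show qmap n (bgen n k) * 1 * (qmap n (bgen n k))⁻¹ = 1 by group]
    exact one_mem _
  | mul a b _ _ ha hb =>
    rw [show qmap n (bgen n k) * (a * b) * (qmap n (bgen n k))⁻¹
        = (qmap n (bgen n k) * a * (qmap n (bgen n k))⁻¹) *
          (qmap n (bgen n k) * b * (qmap n (bgen n k))⁻¹) by group]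
    exact mul_mem ha hb
  | inv a _ ha =>
    rw [show qmap n (bgen n k) * a⁻¹ * (qmap n (bgen n k))⁻¹
        = (qmap n (bgen n k) * a * (qmap n (bgen n k))⁻¹)⁻¹ by group]
    exact inv_mem ha

theorem conj_MM_neg {k : ℕ} (hk : k < n - 1) {x : BraidGroup n ⧸ NN n} (hx : x ∈ MM n) :
    (qmap n (bgen n k))⁻¹ * x * qmap n (bgen n k) ∈ MM n := by
  induction hx using Subgroup.closure_induction with
  | mem z hz =>
    obtain ⟨r, s, h1, h2, rfl⟩ := hz
    exact (conj_gen_mem hk h1 h2).2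
  | one =>
    rw [show (qmap n (bgen n k))⁻¹ * 1 * qmap n (bgen n k) = 1 by group]
    exact one_mem _
  | mul a b _ _ ha hb =>
    rw [show (qmap n (bgen n k))⁻¹ * (a * b) * qmap n (bgen n k)
        = ((qmap n (bgen n k))⁻¹ * a * qmap n (bgen n k)) *
          ((qmap n (bgen n k))⁻¹ * b * qmap n (bgen n k)) by group]
    exact mul_mem ha hb
  | inv a _ ha =>
    rw [show (qmap n (bgen n k))⁻¹ * a⁻¹ * qmap n (bgen n k)
        = ((qmap n (bgen n k))⁻¹ * a * qmap n (bgen n k))⁻¹ by group]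
    exact inv_mem ha

instance MM_normal : (MM n).Normal := by
  rw [← Subgroup.normalizer_eq_top_iff]
  rw [eq_top_iff]
  have hgen : Subgroup.closure
      (Set.range (fun i : Fin (n - 1) => qmap n (PresentedGroup.of i))) = ⊤ := by
    have h1 : Set.range (fun i : Fin (n - 1) => qmap n (PresentedGroup.of i))
        = qmap n '' (Set.range (PresentedGroup.of (rels := braidRels n))) := by
      rw [← Set.range_comp]; rfl
    rw [h1, ← MonoidHom.map_closure, PresentedGroup.closure_range_of,
      ← MonoidHom.range_eq_map, MonoidHom.range_eq_top]
    exact QuotientGroup.mk'_surjective _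
  rw [← hgen, Subgroup.closure_le]
  rintro g ⟨i, rfl⟩
  simp only [SetLike.mem_coe]
  rw [Subgroup.mem_normalizer_iff]
  intro h
  have hb : PresentedGroup.of (rels := braidRels n) i = bgen n (i : ℕ) := by
    rw [bgen_eq_of _ i.2]
  constructor
  · intro hh
    rw [hb]
    exact conj_MM_pos i.2 hh
  · intro hh
    have := conj_MM_neg (n := n) i.2 hh
    rw [show (qmap n (bgen n (i : ℕ)))⁻¹ * (qmap n (PresentedGroup.of i) * h *
        (qmap n (PresentedGroup.of i))⁻¹) * qmap n (bgen n (i : ℕ)) = h from by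
      rw [hb]; group] at this
    exact this

end St18

/-! ### The Coxeter quotient: symmetric group presentation -/

namespace St18

def coxRels (n : ℕ) : Set (FreeGroup (Fin (n - 1))) :=
  braidRels n ∪ {r | ∃ i : Fin (n - 1), r = FreeGroup.of i * FreeGroup.of i}

abbrev CoxGroup (n : ℕ) := PresentedGroup (coxRels n)

noncomputable def cgen (n t : ℕ) : CoxGroup n :=
  if h : t < n - 1 then PresentedGroup.of (⟨t, h⟩ : Fin (n - 1)) else 1

variable {n : ℕ}

theorem cox_mk_rel {r : FreeGroup (Fin (n - 1))} (h : r ∈ coxRels n) :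
    PresentedGroup.mk (coxRels n) r = 1 :=
  (QuotientGroup.eq_one_iff r).2 (Subgroup.subset_normalClosure h)

theorem cgen_eq_of (t : ℕ) (h : t < n - 1) : cgen n t = PresentedGroup.of ⟨t, h⟩ := dif_pos h

theorem cgen_out {t : ℕ} (h : ¬ t < n - 1) : cgen n t = 1 := dif_neg h

theorem cgen_braid {t : ℕ} (h : t + 2 < n) :
    cgen n t * cgen n (t + 1) * cgen n t = cgen n (t + 1) * cgen n t * cgen n (t + 1) := by
  have h1 : t < n - 1 := by omega
  have h2 : t + 1 < n - 1 := by omega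
  have hm : (FreeGroup.of (⟨t, h1⟩ : Fin (n - 1)) * FreeGroup.of (⟨t + 1, h2⟩ : Fin (n - 1)) *
      FreeGroup.of (⟨t, h1⟩ : Fin (n - 1)) *
      (FreeGroup.of (⟨t + 1, h2⟩ : Fin (n - 1)) * FreeGroup.of (⟨t, h1⟩ : Fin (n - 1)) *
        FreeGroup.of (⟨t + 1, h2⟩ : Fin (n - 1)))⁻¹) ∈ coxRels n :=
    Or.inl ⟨⟨t, h1⟩, ⟨t + 1, h2⟩, Or.inl ⟨rfl, rfl⟩⟩
  have := cox_mk_rel hm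
  rw [map_mul, map_inv, mul_inv_eq_one] at this
  rw [cgen_eq_of t h1, cgen_eq_of (t + 1) h2]
  exact this

theorem cgen_comm {t s : ℕ} (h : t + 2 ≤ s) : Commute (cgen n t) (cgen n s) := by
  by_cases hs : s < n - 1
  · have h1 : t < n - 1 := by omega
    have hm : (FreeGroup.of (⟨t, h1⟩ : Fin (n - 1)) * FreeGroup.of (⟨s, hs⟩ : Fin (n - 1)) *
        (FreeGroup.of (⟨s, hs⟩ : Fin (n - 1)) * FreeGroup.of (⟨t, h1⟩ : Fin (n - 1)))⁻¹) ∈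
        coxRels n := Or.inl ⟨⟨t, h1⟩, ⟨s, hs⟩, Or.inr ⟨by simpa using by omega, rfl⟩⟩
    have := cox_mk_rel hm
    rw [map_mul, map_inv, mul_inv_eq_one] at this
    rw [cgen_eq_of t h1, cgen_eq_of s hs]
    exact this
  · rw [cgen_out hs]; exact Commute.one_right _

theorem cgen_sq (t : ℕ) : cgen n t * cgen n t = 1 := by
  by_cases h : t < n - 1
  · have hm : (FreeGroup.of (⟨t, h⟩ : Fin (n - 1)) * FreeGroup.of (⟨t, h⟩ : Fin (n - 1))) ∈
        coxRels n := Or.inr ⟨⟨t, h⟩, rfl⟩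
    have := cox_mk_rel hm
    rw [map_mul] at this
    rw [cgen_eq_of t h]
    exact this
  · rw [cgen_out h, one_mul]

/-- descending products `t_{b-1} t_{b-2} ⋯ t_a` -/
noncomputable def cseg (n a b : ℕ) : CoxGroup n :=
  (((List.range' a (b - a)).map (cgen n)).reverse).prod

theorem cseg_nil {a b : ℕ} (h : b ≤ a) : cseg n a b = 1 := by
  simp [cseg, Nat.sub_eq_zero_of_le h]

theorem cseg_cons {a b : ℕ} (h : a < b) : cseg n a b = cseg n (a + 1) b * cgen n a := by
  unfold cseg
  rw [show b - a = (b - (a + 1)) + 1 by omega, List.range'_succ]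
  simp

theorem cseg_split {a c b : ℕ} (h1 : a ≤ c) (h2 : c ≤ b) :
    cseg n a b = cseg n c b * cseg n a c := by
  have key : List.range' a (c - a) ++ List.range' c (b - c) = List.range' a (b - a) := by
    have h3 := List.range'_append (s := a) (m := c - a) (n := b - c) (step := 1)
    rw [show a + 1 * (c - a) = c by omega, show c - a + (b - c) = b - a by omega] at h3
    exact h3
  unfold cseg
  rw [← key, List.map_append, List.reverse_append, List.prod_append]

theorem cgen_comm_cseg {k a b : ℕ} (h : ∀ t, a ≤ t → t < b → t + 2 ≤ k ∨ k + 2 ≤ t) :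
    Commute (cgen n k) (cseg n a b) := by
  apply Commute.list_prod_right
  intro x hx
  rw [List.mem_reverse] at hx
  obtain ⟨t, ht, rfl⟩ := List.mem_map.1 hx
  rw [List.mem_range'_1] at ht
  rcases h t ht.1 (by omega) with h' | h'
  · exact (cgen_comm h').symm
  · exact cgen_comm h'

/-- inclusion of Coxeter groups -/
noncomputable def cox_incl (n : ℕ) : CoxGroup n →* CoxGroup (n + 1) := by
  refine PresentedGroup.toGroup (f := fun i : Fin (n - 1) => cgen (n + 1) (i : ℕ)) ?_
  rintro r (⟨i, j, hr | hr⟩ | ⟨i, rfl⟩)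
  · obtain ⟨hij, rfl⟩ := hr
    simp only [map_mul, map_inv, FreeGroup.lift_apply_of]
    rw [mul_inv_eq_one]
    have : (i : ℕ) + 2 < n + 1 := by have := j.2; omega
    have hb := cgen_braid (n := n + 1) this
    rw [← hij] at *
    simpa using hb
  · obtain ⟨hij, rfl⟩ := hr
    simp only [map_mul, map_inv, FreeGroup.lift_apply_of]
    rw [mul_inv_eq_one]
    exact (cgen_comm (n := n + 1) (by omega)).eq
  · simp only [map_mul, FreeGroup.lift_apply_of]
    have := cgen_sq (n := n + 1) (i : ℕ)
    rw [cgen_eq_of (n := n + 1) (i : ℕ) (by have := i.2; omega)] at this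
    rwa [cgen_eq_of (n := n + 1) (i : ℕ) (by have := i.2; omega)]

theorem cox_incl_cgen {k : ℕ} (h : k < n - 1) :
    cox_incl n (cgen n k) = cgen (n + 1) k := by
  rw [cgen_eq_of k h]
  exact PresentedGroup.toGroup.of _

end St18

namespace St18
variable {n : ℕ}

theorem cseg_single (a : ℕ) : cseg n a (a + 1) = cgen n a := by
  unfold cseg
  simp

theorem cseg_top_peel {j k : ℕ} (h1 : j ≤ k) : cseg n j (k + 1) = cgen n k * cseg n j k := by
  rw [cseg_split (c := k) h1 (by omega), cseg_single]

/-- moving a generator across a descending segment from below -/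
theorem cseg_move {j k : ℕ} (hj : j < k) (hk : k < n) :
    cseg (n + 1) j n * cgen (n + 1) k = cgen (n + 1) (k - 1) * cseg (n + 1) j n := by
  have e0 : cseg (n + 1) j n
      = cseg (n + 1) (k + 1) n * (cgen (n + 1) k * (cgen (n + 1) (k - 1) *
        cseg (n + 1) j (k - 1))) := by
    rw [cseg_split (a := j) (c := k + 1) (b := n) (by omega) (by omega), cseg_top_peel (by omega)]
    congr 1
    rw [show k = (k - 1) + 1 by omega, cseg_top_peel (by omega),
      show k - 1 + 1 - 1 = k - 1 by omega]
  have hc1 : Commute (cgen (n + 1) k) (cseg (n + 1) j (k - 1)) :=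
    cgen_comm_cseg (fun t ht htt => Or.inl (by omega))
  have hc2 : Commute (cgen (n + 1) (k - 1)) (cseg (n + 1) (k + 1) n) :=
    cgen_comm_cseg (n := n + 1) (k := k - 1) (a := k + 1) (b := n)
      (fun t ht htt => Or.inr (by omega))
  have hbr := cgen_braid (n := n + 1) (t := k - 1) (by omega)
  rw [show k - 1 + 1 = k by omega] at hbr
  calc cseg (n + 1) j n * cgen (n + 1) k
      = cseg (n + 1) (k + 1) n * (cgen (n + 1) k * cgen (n + 1) (k - 1)) *
        (cseg (n + 1) j (k - 1) * cgen (n + 1) k) := by rw [e0]; group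
    _ = cseg (n + 1) (k + 1) n * (cgen (n + 1) k * cgen (n + 1) (k - 1) * cgen (n + 1) k) *
        cseg (n + 1) j (k - 1) := by rw [← hc1.eq]; group
    _ = cseg (n + 1) (k + 1) n * (cgen (n + 1) (k - 1) * cgen (n + 1) k * cgen (n + 1) (k - 1)) *
        cseg (n + 1) j (k - 1) := by rw [← hbr]
    _ = (cgen (n + 1) (k - 1) * cseg (n + 1) (k + 1) n) * (cgen (n + 1) k *
        (cgen (n + 1) (k - 1) * cseg (n + 1) j (k - 1))) := by rw [hc2.eq]; group
    _ = cgen (n + 1) (k - 1) * cseg (n + 1) j n := by rw [e0]; group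

def coverSet (n : ℕ) : Set (CoxGroup (n + 1)) :=
  {w | ∃ (u : CoxGroup n) (j : ℕ), j ≤ n ∧ w = cox_incl n u * cseg (n + 1) j n}

theorem cox_step {k : ℕ} (hk : k < n) {w : CoxGroup (n + 1)} (hw : w ∈ coverSet n) :
    w * cgen (n + 1) k ∈ coverSet n := by
  obtain ⟨u, j, hj, rfl⟩ := hw
  rcases Nat.lt_trichotomy (k + 1) j with h | h | h
  · -- k + 2 ≤ j : generator commutes past the segment
    have hc : Commute (cgen (n + 1) k) (cseg (n + 1) j n) :=
      cgen_comm_cseg (fun t ht htt => Or.inr (by omega))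
    refine ⟨u * cgen n k, j, hj, ?_⟩
    rw [map_mul, cox_incl_cgen (by omega)]
    rw [show cox_incl n u * cseg (n + 1) j n * cgen (n + 1) k
        = cox_incl n u * (cgen (n + 1) k * cseg (n + 1) j n) from by
      rw [mul_assoc, ← hc.eq]]
    group
  · -- k + 1 = j : extend the segment
    refine ⟨u, k, by omega, ?_⟩
    rw [show cseg (n + 1) k n = cseg (n + 1) j n * cgen (n + 1) k from by
      rw [← h, cseg_cons (a := k) (by omega)]]
    group
  · rcases Nat.lt_trichotomy k j with g | g | g
    · omega
    · -- k = j : shorten the segment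
      subst g
      refine ⟨u, k + 1, by omega, ?_⟩
      rw [cseg_cons (a := k) (by omega), mul_assoc, mul_assoc, cgen_sq, mul_one]
    · -- j < k : slide down
      refine ⟨u * cgen n (k - 1), j, hj, ?_⟩
      rw [map_mul, cox_incl_cgen (by omega), mul_assoc, cseg_move g hk]
      group

/-- subgroup of elements stabilising a set under right multiplication -/
def rightStab {G : Type*} [Group G] (S : Set G) : Subgroup G where
  carrier := {g | (fun x => x * g) '' S = S}
  one_mem' := by simp
  mul_mem' := by
    intro a b ha hb
    show (fun x => x * (a * b)) '' S = S
    have : (fun x : G => x * (a * b)) = (fun x => x * b) ∘ (fun x => x * a) := by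
      funext x; simp [mul_assoc]
    rw [this, Set.image_comp, ha, hb]
  inv_mem' := by
    intro a ha
    show (fun x => x * a⁻¹) '' S = S
    have h2 := congrArg (Set.image (fun x : G => x * a⁻¹)) ha
    rw [← Set.image_comp] at h2
    have h3 : ((fun x : G => x * a⁻¹) ∘ fun x => x * a) = id := by
      funext x; simp
    rw [h3, Set.image_id] at h2
    exact h2.symm

theorem cox_cover : ∀ w : CoxGroup (n + 1), w ∈ coverSet n := by
  have hone : (1 : CoxGroup (n + 1)) ∈ coverSet n :=
    ⟨1, n, le_refl n, by rw [map_one, cseg_nil (le_refl n), mul_one]⟩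
  have hstab : ∀ k : Fin ((n + 1) - 1),
      (PresentedGroup.of k : CoxGroup (n + 1)) ∈ rightStab (coverSet n) := by
    intro k
    have hk : (k : ℕ) < n := by have := k.2; omega
    have hof : (PresentedGroup.of k : CoxGroup (n + 1)) = cgen (n + 1) (k : ℕ) := by
      rw [cgen_eq_of _ (by omega)]
    show (fun x => x * (PresentedGroup.of k : CoxGroup (n + 1))) '' coverSet n = coverSet n
    rw [hof]
    apply Set.Subset.antisymm
    · rintro _ ⟨x, hx, rfl⟩
      exact cox_step hk hx
    · intro x hx
      refine ⟨x * cgen (n + 1) (k : ℕ), cox_step hk hx, ?_⟩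
      show x * cgen (n + 1) (k : ℕ) * cgen (n + 1) (k : ℕ) = x
      rw [mul_assoc, cgen_sq, mul_one]
  intro w
  have hw : w ∈ rightStab (coverSet n) :=
    PresentedGroup.generated_by _ (rightStab (coverSet n)) hstab w
  have := hw
  show w ∈ coverSet n
  have h4 : (fun x => x * w) '' coverSet n = coverSet n := hw
  rw [← h4]
  exact ⟨1, hone, one_mul w⟩

theorem cox_finite_card : ∀ n : ℕ, Finite (CoxGroup n) ∧ Nat.card (CoxGroup n) ≤ n.factorial := by
  intro n
  induction n with
  | zero =>
    have htriv : ∀ x : CoxGroup 0, x = 1 := by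
      intro x
      have : x ∈ (⊥ : Subgroup (CoxGroup 0)) :=
        PresentedGroup.generated_by _ ⊥ (fun j => absurd j.2 (by omega)) x
      simpa using this
    have hs : Function.Surjective (fun _ : Unit => (1 : CoxGroup 0)) := by
      intro x; exact ⟨(), (htriv x).symm⟩
    refine ⟨Finite.of_surjective _ hs, ?_⟩
    calc Nat.card (CoxGroup 0) ≤ Nat.card Unit := Nat.card_le_card_of_surjective _ hs
      _ = 1 := Nat.card_unique
      _ ≤ Nat.factorial 0 := by simp [Nat.factorial]
  | succ m ih =>
    obtain ⟨hfin, hcard⟩ := ih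
    have hs : Function.Surjective (fun p : CoxGroup m × Fin (m + 1) =>
        cox_incl m p.1 * cseg (m + 1) (p.2 : ℕ) m) := by
      intro w
      obtain ⟨u, j, hj, rfl⟩ := cox_cover (n := m) w
      exact ⟨(u, ⟨j, by omega⟩), rfl⟩
    refine ⟨Finite.of_surjective _ hs, ?_⟩
    calc Nat.card (CoxGroup (m + 1)) ≤ Nat.card (CoxGroup m × Fin (m + 1)) :=
          Nat.card_le_card_of_surjective _ hs
      _ = Nat.card (CoxGroup m) * (m + 1) := by
          simp [Nat.card_prod]
      _ ≤ m.factorial * (m + 1) := by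
          exact Nat.mul_le_mul_right _ hcard
      _ = (m + 1).factorial := by rw [Nat.factorial_succ, Nat.mul_comm]

end St18

/-! ### Assembly -/

namespace St18
variable {n : ℕ}

theorem lift_of_eq_mk {rels : Set (FreeGroup (Fin (n - 1)))} :
    (FreeGroup.lift (fun i : Fin (n - 1) => (PresentedGroup.of i : PresentedGroup rels)))
      = PresentedGroup.mk rels := by
  apply FreeGroup.ext_hom
  intro a
  rw [FreeGroup.lift_apply_of]
  rfl

/-- the projection from the braid group to the Coxeter group -/
noncomputable def rho (n : ℕ) : BraidGroup n →* CoxGroup n := by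
  refine PresentedGroup.toGroup (f := fun i : Fin (n - 1) => (PresentedGroup.of i : CoxGroup n)) ?_
  intro r hr
  rw [show (FreeGroup.lift fun i : Fin (n-1) => (PresentedGroup.of i : CoxGroup n)) r
      = PresentedGroup.mk (coxRels n) r from by rw [lift_of_eq_mk]]
  exact cox_mk_rel (Or.inl hr)

theorem rho_of (i : Fin (n - 1)) :
    rho n (PresentedGroup.of i) = PresentedGroup.of i := PresentedGroup.toGroup.of _

theorem rho_surjective : Function.Surjective (rho n) := by
  have h : (rho n).comp (PresentedGroup.mk (braidRels n)) = PresentedGroup.mk (coxRels n) := by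
    apply FreeGroup.ext_hom
    intro a
    simp only [MonoidHom.comp_apply]
    exact rho_of a
  intro w
  obtain ⟨x, rfl⟩ := PresentedGroup.mk_surjective (coxRels n) w
  exact ⟨PresentedGroup.mk (braidRels n) x, by rw [← h]; rfl⟩

section WithPi
variable (π : BraidGroup n →* Equiv.Perm (Fin n)) (hgen : IsBraidProj n π)

/-- the symmetric group as a quotient of the Coxeter group -/
noncomputable def chi : CoxGroup n →* Equiv.Perm (Fin n) := by
  refine PresentedGroup.toGroup
    (f := fun i : Fin (n - 1) => π (PresentedGroup.of i)) ?_
  have hl : (FreeGroup.lift fun i : Fin (n - 1) => π (PresentedGroup.of i))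
      = π.comp (PresentedGroup.mk (braidRels n)) := by
    apply FreeGroup.ext_hom
    intro a
    simp only [MonoidHom.comp_apply, FreeGroup.lift_apply_of]
    rfl
  rintro r (hr | ⟨i, rfl⟩)
  · rw [hl]
    simp only [MonoidHom.comp_apply]
    rw [show PresentedGroup.mk (braidRels n) r = 1 from mk_rel hr, map_one]
  · rw [hl]
    simp only [map_mul, MonoidHom.comp_apply]
    rw [show (PresentedGroup.mk (braidRels n)) (FreeGroup.of i) = PresentedGroup.of i from rfl]
    rw [hgen i]
    exact Equiv.swap_mul_self _ _

theorem chi_rho : (chi π hgen).comp (rho n) = π := by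
  apply PresentedGroup.ext
  intro i
  simp only [MonoidHom.comp_apply]
  rw [rho_of]
  exact PresentedGroup.toGroup.of _

theorem chi_injective (hsurj : Function.Surjective π) :
    Function.Injective (chi π hgen) := by
  obtain ⟨hfin, hcard⟩ := cox_finite_card n
  have hchisurj : Function.Surjective (chi π hgen) := by
    intro x
    obtain ⟨y, hy⟩ := hsurj x
    refine ⟨rho n y, ?_⟩
    have h5 := DFunLike.congr_fun (chi_rho (n := n) π hgen) y
    simp only [MonoidHom.comp_apply] at h5
    rw [h5, hy]
  have hcard2 : Nat.card (Equiv.Perm (Fin n)) = n.factorial := by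
    rw [Nat.card_eq_fintype_card, Fintype.card_perm, Fintype.card_fin]
  have hle : Nat.card (Equiv.Perm (Fin n)) ≤ Nat.card (CoxGroup n) :=
    Nat.card_le_card_of_surjective _ hchisurj
  have heq : Nat.card (CoxGroup n) = Nat.card (Equiv.Perm (Fin n)) := by omega
  exact ((Nat.bijective_iff_surjective_and_card (chi π hgen)).2 ⟨hchisurj, heq⟩).1

include hgen in
theorem ker_pi_rho {y : BraidGroup n} (hsurj : Function.Surjective π) (hy : y ∈ π.ker) :
    rho n y = 1 := by
  apply chi_injective π hgen hsurj
  rw [map_one]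
  have h6 : (chi π hgen).comp (rho n) y = 1 := by rw [chi_rho]; exact hy
  simpa only [MonoidHom.comp_apply] using h6

end WithPi

/-- the map from the Coxeter group to the quotient of `Q` by `M` -/
noncomputable def psi (n : ℕ) :
    CoxGroup n →* (BraidGroup n ⧸ NN n) ⧸ MM n := by
  refine PresentedGroup.toGroup
    (f := fun i : Fin (n - 1) =>
      QuotientGroup.mk' (MM n) (qmap n (PresentedGroup.of i))) ?_
  have hl : (FreeGroup.lift fun i : Fin (n - 1) =>
      QuotientGroup.mk' (MM n) (qmap n (PresentedGroup.of i)))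
      = ((QuotientGroup.mk' (MM n)).comp (qmap n)).comp (PresentedGroup.mk (braidRels n)) := by
    apply FreeGroup.ext_hom
    intro a
    simp only [MonoidHom.comp_apply, FreeGroup.lift_apply_of]
    rfl
  rintro r (hr | ⟨i, rfl⟩)
  · rw [hl]
    simp only [MonoidHom.comp_apply]
    rw [show PresentedGroup.mk (braidRels n) r = 1 from mk_rel hr, map_one, map_one]
  · rw [hl]
    simp only [map_mul, MonoidHom.comp_apply]
    rw [show (PresentedGroup.mk (braidRels n)) (FreeGroup.of i) = PresentedGroup.of i from rfl]
    rw [← map_mul, ← MonoidHom.mem_ker, QuotientGroup.ker_mk']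
    have : qmap n (PresentedGroup.of i) * qmap n (PresentedGroup.of i)
        = aa n (i : ℕ) ((i : ℕ) + 1) := by
      rw [← qsq (n := n) (i : ℕ), pow_two, bgen_eq_of _ i.2]
    rw [this]
    exact aa_mem (by omega) (by have := i.2; omega)

theorem psi_rho :
    (psi n).comp (rho n) = (QuotientGroup.mk' (MM n)).comp (qmap n) := by
  apply PresentedGroup.ext
  intro i
  simp only [MonoidHom.comp_apply]
  rw [rho_of]
  exact PresentedGroup.toGroup.of _

/-- the key inclusion: squares of kernel elements lie in the normal closure -/
theorem sq_mem_NN (π : BraidGroup n →* Equiv.Perm (Fin n)) (hgen : IsBraidProj n π)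
    (hsurj : Function.Surjective π) {y : BraidGroup n} (hy : y ∈ π.ker) :
    y ^ 2 ∈ NN n := by
  have h1 : rho n y = 1 := ker_pi_rho π hgen hsurj hy
  have h2 : QuotientGroup.mk' (MM n) (qmap n y) = 1 := by
    have h7 := DFunLike.congr_fun (psi_rho (n := n)) y
    simp only [MonoidHom.comp_apply] at h7
    rw [← h7, h1, map_one]
  have h3 : qmap n y ∈ MM n := by
    rw [← QuotientGroup.ker_mk' (MM n), MonoidHom.mem_ker]
    exact h2
  have h4 : (qmap n y) ^ 2 = 1 := MM_sq h3
  rw [← map_pow] at h4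
  exact qmap_eq_one_iff.1 h4

theorem comm_as_squares {G : Type*} [Group G] (x y : G) :
    ⁅x, y⁆ = (x * y) ^ 2 * (y⁻¹ * x⁻¹ * y) ^ 2 * (y⁻¹) ^ 2 := by
  simp only [commutatorElement_def, pow_two]
  group

theorem halfTwist_sq_ker (π : BraidGroup n →* Equiv.Perm (Fin n)) (hgen : IsBraidProj n π)
    (r s : ℕ) : (halfTwist n r s) ^ 2 ∈ π.ker := by
  rw [MonoidHom.mem_ker, map_pow]
  unfold halfTwist
  rw [map_mul, map_mul, map_inv, conj_pow]
  rw [bgen_sq_one_aux π hgen]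
  group

end St18

/-- For all `n`, the level 4 congruence subgroup `B_n[4] = PB_n²` (the
subgroup of the pure braid group generated by all squares) is normally generated in `B_n`
by the elements `[b_i², b_{i+1}²]`, `[b_{i,i+2}², b_{i+1,i+3}²]`, and `b_i⁴`
(`0`-based index ranges corresponding to `1 ≤ i ≤ n-1`, `1 ≤ i ≤ n-4`, `1 ≤ i ≤ n-1`):
the normal closure of this set equals `PB_n²`.  Equivalently, the quotient of `B_n` by this
normal closure is `𝒵_n = B_n/PB_n²`. -/
theorem statement18 (n : ℕ) (π : BraidGroup n →* Equiv.Perm (Fin n))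
    (hgen : IsBraidProj n π) (hsurj : Function.Surjective π) :
    Subgroup.normalClosure
        ({x : BraidGroup n | ∃ i : ℕ, i < n - 1 ∧
            x = ⁅(bgen n i) ^ 2, (bgen n (i + 1)) ^ 2⁆} ∪
          {x : BraidGroup n | ∃ i : ℕ, i + 4 < n ∧
            x = ⁅(bb n i (i + 2)) ^ 2, (bb n (i + 1) (i + 3)) ^ 2⁆} ∪
          {x : BraidGroup n | ∃ i : ℕ, i < n - 1 ∧ x = (bgen n i) ^ 4}) =
      Subgroup.closure {x : BraidGroup n | ∃ y ∈ π.ker, x = y ^ 2} := by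
  classical
  set H : Subgroup (BraidGroup n) :=
    Subgroup.closure {x : BraidGroup n | ∃ y ∈ π.ker, x = y ^ 2} with hH
  haveI hHnormal : H.Normal := by
    constructor
    intro h hh g
    rw [hH] at hh ⊢
    induction hh using Subgroup.closure_induction with
    | mem z hz =>
      obtain ⟨y, hy, rfl⟩ := hz
      apply Subgroup.subset_closure
      exact ⟨g * y * g⁻¹, by rw [MonoidHom.mem_ker, map_mul, map_mul,
        MonoidHom.mem_ker.1 hy, map_inv]; group, (conj_pow).symm⟩
    | one => rw [show g * 1 * g⁻¹ = 1 by group]; exact one_mem _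
    | mul a b _ _ ha hb =>
      rw [show g * (a * b) * g⁻¹ = (g * a * g⁻¹) * (g * b * g⁻¹) by group]
      exact mul_mem ha hb
    | inv a _ ha =>
      rw [show g * a⁻¹ * g⁻¹ = (g * a * g⁻¹)⁻¹ by group]
      exact inv_mem ha
  have sq_mem_H : ∀ y ∈ π.ker, y ^ 2 ∈ H := fun y hy =>
    Subgroup.subset_closure ⟨y, hy, rfl⟩
  have comm_mem_H : ∀ x y : BraidGroup n, x ∈ π.ker → y ∈ π.ker → ⁅x, y⁆ ∈ H := by
    intro x y hx hy
    rw [St18.comm_as_squares]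
    refine mul_mem (mul_mem ?_ ?_) ?_
    · exact sq_mem_H _ (mul_mem hx hy)
    · exact sq_mem_H _ (mul_mem (mul_mem (inv_mem hy) (inv_mem hx)) hy)
    · exact sq_mem_H _ (inv_mem hy)
  apply le_antisymm
  · apply Subgroup.normalClosure_le_normal
    rintro x ((⟨i, hi, rfl⟩ | ⟨i, hi, rfl⟩) | ⟨i, hi, rfl⟩)
    · refine comm_mem_H _ _ ?_ ?_ <;>
        · rw [MonoidHom.mem_ker, map_pow]
          exact St18.bgen_sq_one_aux π hgen _
    · unfold bb
      exact comm_mem_H _ _ (St18.halfTwist_sq_ker π hgen _ _)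
        (St18.halfTwist_sq_ker π hgen _ _)
    · have : (bgen n i) ^ 4 = ((bgen n i) ^ 2) ^ 2 := by group
      rw [this]
      apply sq_mem_H
      rw [MonoidHom.mem_ker, map_pow]
      exact St18.bgen_sq_one_aux π hgen _
  · rw [hH, Subgroup.closure_le]
    rintro x ⟨y, hy, rfl⟩
    exact St18.sq_mem_NN π hgen hsurj hy
end Abstract2
end
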